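/- arXiv:1203.2429 — 7 statements merged into one kernel-verified Lean document; each statement's English description precedes it below -/
import Mathlib

section
/- A finite semigroup S is not Mal'cev nilpotent if and only if there exist a positive integer m, distinct elements x, y in S, and elements w_1, ..., w_m in S^1 such that x = λ_m(x, y, w_1, ..., w_m) and y = ρ_m(x, y, w_1, ..., w_m). -/
/-- One multiplication step `a · w · b` where `w` ranges over `S¹`
(`none` playing the role of the adjoined identity). -/
def mulW {S : Type*} [Semigroup S] (a : S) (w : Option S) (b : S) : S :=
  match w with
  | none => a * b
  | some c => a * c * b

/-- The Mal'cev sequences: `(malcev x y w n).1 = λ_n` and `(malcev x y w n).2 = ρ_n`,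
with `λ_0 = x`, `ρ_0 = y`, `λ_{n+1} = λ_n w_{n+1} ρ_n`, `ρ_{n+1} = ρ_n w_{n+1} λ_n`. -/
def malcev {S : Type*} [Semigroup S] (x y : S) (w : ℕ → Option S) : ℕ → S × S
  | 0 => (x, y)
  | n + 1 =>
      let p := malcev x y w n
      (mulW p.1 (w n) p.2, mulW p.2 (w n) p.1)

/-- Mal'cev nilpotency of a (multiplicatively closed) subset `A` of `S`,
computed with parameters from `A¹`. -/
def SetMN {S : Type*} [Semigroup S] (A : Set S) : Prop :=
  ∃ n : ℕ, 0 < n ∧ ∀ x ∈ A, ∀ y ∈ A, ∀ w : ℕ → Option S,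
    (∀ k c, w k = some c → c ∈ A) →
    (malcev x y w n).1 = (malcev x y w n).2

/-- A semigroup is Mal'cev nilpotent. -/
def IsMN (S : Type*) [Semigroup S] : Prop := SetMN (Set.univ : Set S)

/-- Equality in the Rees quotient by (the possibly empty ideal) `I`. -/
def ReesEq {S : Type*} [Semigroup S] (I : Set S) (a b : S) : Prop :=
  a = b ∨ (a ∈ I ∧ b ∈ I)

/-- Mal'cev nilpotency of the Rees quotient `A / I` (computed by lifting to `A`). -/
def SetMNMod {S : Type*} [Semigroup S] (I A : Set S) : Prop :=
  ∃ n : ℕ, 0 < n ∧ ∀ x ∈ A, ∀ y ∈ A, ∀ w : ℕ → Option S,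
    (∀ k c, w k = some c → c ∈ A) →
    ReesEq I (malcev x y w n).1 (malcev x y w n).2

/-- `I` is an ideal of (the mul-closed subset) `T`; the empty set counts as an ideal. -/
def IsIdealIn {S : Type*} [Semigroup S] (T I : Set S) : Prop :=
  I ⊆ T ∧ ∀ a ∈ I, ∀ t ∈ T, t * a ∈ I ∧ a * t ∈ I

/-- Edge of the upper non-nilpotent graph `N_S`: `⟨a,b⟩` is not Mal'cev nilpotent. -/
def NEdge {S : Type*} [Semigroup S] (a b : S) : Prop :=
  a ≠ b ∧ ¬ SetMN (Subsemigroup.closure ({a, b} : Set S) : Set S)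

/-- The generating set of the subsemigroup `⟨x, y, w_1, …, w_m⟩`. -/
def genSet {S : Type*} [Semigroup S] (x y : S) (w : ℕ → Option S) (m : ℕ) : Set S :=
  {x, y} ∪ {c | ∃ k, k < m ∧ w k = some c}

/-- A pseudo-nilpotent semigroup. -/
def IsPN (S : Type*) [Semigroup S] : Prop :=
  ∀ (x y : S) (w : ℕ → Option S) (m : ℕ) (I : Set S),
    IsIdealIn (Subsemigroup.closure (genSet x y w m) : Set S) I →
    (malcev x y w m).1 ∉ I → (malcev x y w m).2 ∉ I →
    (∃ t, t < m ∧ (malcev x y w t).1 ≠ (malcev x y w t).2 ∧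
      malcev x y w t = malcev x y w m) →
    ∀ i ≤ m, ¬ SetMNMod I
      (Subsemigroup.closure ({(malcev x y w i).1, (malcev x y w i).2} : Set S) : Set S)

theorem malcev_congr' {S : Type*} [Semigroup S] (x y : S) (w w' : ℕ → Option S) (n : ℕ)
    (h : ∀ k < n, w k = w' k) : malcev x y w n = malcev x y w' n := by
  induction n with
  | zero => rfl
  | succ n ih =>
    simp only [malcev]
    rw [ih (fun k hk => h k (Nat.lt_succ_of_lt hk)), h n (Nat.lt_succ_self n)]

theorem malcev_shift' {S : Type*} [Semigroup S] (x y : S) (w : ℕ → Option S) (s k : ℕ) :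
    malcev x y w (s + k) =
      malcev (malcev x y w s).1 (malcev x y w s).2 (fun j => w (s + j)) k := by
  induction k with
  | zero => simp [malcev]
  | succ k ih => rw [← Nat.add_assoc]; simp only [malcev, ih]

theorem malcev_eq_stable' {S : Type*} [Semigroup S] (x y : S) (w : ℕ → Option S) (k : ℕ)
    (h : (malcev x y w k).1 = (malcev x y w k).2) :
    ∀ n, k ≤ n → (malcev x y w n).1 = (malcev x y w n).2 := by
  intro n hn
  induction n with
  | zero => exact (Nat.le_zero.mp hn) ▸ h
  | succ n ih =>
    rcases Nat.eq_or_lt_of_le hn with h' | h'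
    · exact h' ▸ h
    · have := ih (Nat.lt_succ_iff.mp h')
      simp only [malcev]
      rw [this]

/-- A finite semigroup `S` is not Mal'cev nilpotent iff there exist `m > 0`,
distinct `x, y ∈ S` and `w_1, …, w_m ∈ S¹` with `x = λ_m` and `y = ρ_m`. -/
theorem stmt0 {S : Type*} [Semigroup S] [Finite S] :
    ¬ IsMN S ↔ ∃ m : ℕ, 0 < m ∧ ∃ x y : S, x ≠ y ∧ ∃ w : ℕ → Option S,
      malcev x y w m = (x, y) := by
  constructor
  · intro h
    rw [IsMN, SetMN] at h
    push_neg at h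
    have : Fintype (S × S) := Fintype.ofFinite _
    set N := Fintype.card (S × S) with hN
    obtain ⟨x, -, y, -, w, -, hne⟩ := h (N + 1) (Nat.succ_pos N)
    -- pigeonhole on the pairs p_k, k = 0 .. N
    have hcard : Fintype.card (S × S) < Fintype.card (Fin (N + 1)) := by simp [hN]
    obtain ⟨a, b, hab, hfab⟩ :=
      Fintype.exists_ne_map_eq_of_card_lt (fun k : Fin (N + 1) => malcev x y w k.val) hcard
    -- wlog a.val < b.val
    have key : ∀ s t : ℕ, s < t → t ≤ N → malcev x y w s = malcev x y w t →
        ∃ m : ℕ, 0 < m ∧ ∃ x' y' : S, x' ≠ y' ∧ ∃ w' : ℕ → Option S,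
          malcev x' y' w' m = (x', y') := by
      intro s t hst htN hps
      refine ⟨t - s, Nat.sub_pos_of_lt hst, (malcev x y w s).1, (malcev x y w s).2, ?_,
        fun j => w (s + j), ?_⟩
      · intro hEq
        exact hne (malcev_eq_stable' x y w s hEq (N + 1) (Nat.le_succ_of_le
          (le_trans (Nat.le_of_lt hst) htN)))
      · rw [← malcev_shift', Nat.add_sub_cancel' (Nat.le_of_lt hst), ← hps]
    rcases Nat.lt_or_ge a.val b.val with h' | h'
    · exact key a.val b.val h' (Nat.lt_succ_iff.mp b.isLt) hfab
    · have h'' : b.val < a.val :=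
        lt_of_le_of_ne h' fun hv => hab (Fin.val_injective hv.symm)
      exact key b.val a.val h'' (Nat.lt_succ_iff.mp a.isLt) hfab.symm
  · rintro ⟨m, hm, x, y, hxy, w, hw⟩
    rintro ⟨n, hn, h⟩
    set w' : ℕ → Option S := fun k => w (k % m) with hw'
    have hagree : ∀ q : ℕ, ∀ k < m, w' (m * q + k) = w k := by
      intro q k hk
      simp only [hw']
      congr 1
      rw [Nat.add_comm, Nat.add_mul_mod_self_left, Nat.mod_eq_of_lt hk]
    have hkey : ∀ q : ℕ, malcev x y w' (m * q) = (x, y) := by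
      intro q
      induction q with
      | zero => rfl
      | succ q ih =>
        have hmq : m * (q + 1) = m * q + m := by ring
        rw [hmq, malcev_shift', ih]
        rw [malcev_congr' x y (fun j => w' (m * q + j)) w m (fun k hk => hagree q k hk)]
        exact hw
    -- at step n for w', λ ≠ ρ
    have hr : n % m < m := Nat.mod_lt n hm
    have hdecomp : n = m * (n / m) + n % m := (Nat.div_add_mod n m).symm
    have hmalc : malcev x y w' n = malcev x y w (n % m) := by
      conv_lhs => rw [hdecomp]
      rw [malcev_shift', hkey (n / m)]
      exact malcev_congr' x y _ w (n % m)
        (fun k hk => hagree (n / m) k (lt_trans hk hr))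
    have heq := h x (Set.mem_univ x) y (Set.mem_univ y) w'
      (fun k c _ => Set.mem_univ c)
    rw [hmalc] at heq
    have : (malcev x y w m).1 = (malcev x y w m).2 :=
      malcev_eq_stable' x y w (n % m) heq m (Nat.le_of_lt hr)
    rw [hw] at this
    exact hxy this
end

section
/- If a finite semigroup S is pseudo-nilpotent and its upper non-nilpotent graph N_S is empty (has no edges), then S is Mal'cev nilpotent. -/
lemma malcev_absorb {S : Type*} [Semigroup S] (x y : S) (w : ℕ → Option S) :
    ∀ n m, n ≤ m → (malcev x y w n).1 = (malcev x y w n).2 →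
      (malcev x y w m).1 = (malcev x y w m).2 := by
  intro n m hnm h
  induction m with
  | zero => exact Nat.le_zero.mp hnm ▸ h
  | succ k ih =>
      rcases Nat.lt_succ_iff_lt_or_eq.mp (Nat.lt_succ_of_le hnm) with h1 | h1
      · have hk := ih (Nat.lt_succ_iff.mp h1)
        simp only [malcev]
        rw [hk]
      · rw [← h1]; exact h

/-- If a finite semigroup `S` is pseudo-nilpotent and its upper non-nilpotent
graph `N_S` has no edges, then `S` is Mal'cev nilpotent. -/
theorem stmt2 {S : Type*} [Semigroup S] [Finite S] (hPN : IsPN S)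
    (hEmpty : ∀ a b : S, ¬ NEdge a b) :
    IsMN S := by
  haveI := Fintype.ofFinite S
  classical
  set N := Fintype.card (S × S) with hN
  refine ⟨N + 1, Nat.succ_pos _, ?_⟩
  intro x _ y _ w _
  by_contra hne
  have habs : ∀ i, i ≤ N + 1 → (malcev x y w i).1 ≠ (malcev x y w i).2 := by
    intro i hi h
    exact hne (malcev_absorb x y w i (N + 1) hi h)
  obtain ⟨t, ht, m, hm, htne, heq⟩ :
      ∃ t ∈ Finset.range (N + 1), ∃ m ∈ Finset.range (N + 1),
        t ≠ m ∧ malcev x y w t = malcev x y w m := by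
    apply Finset.exists_ne_map_eq_of_card_lt_of_maps_to
      (t := (Finset.univ : Finset (S × S)))
    · simp [hN]
    · intro a _; exact Finset.mem_univ _
  simp only [Finset.mem_range] at ht hm
  have key : ∀ t m : ℕ, t < m → m < N + 1 → malcev x y w t = malcev x y w m → False := by
    intro t m hlt hmN heq
    have hIdeal : IsIdealIn (Subsemigroup.closure (genSet x y w m) : Set S) (∅ : Set S) :=
      ⟨Set.empty_subset _, fun a ha => ha.elim⟩
    have hneq : (malcev x y w t).1 ≠ (malcev x y w t).2 :=
      habs t (by omega)
    have hkey := hPN x y w m ∅ hIdeal (Set.notMem_empty _) (Set.notMem_empty _)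
      ⟨t, hlt, hneq, heq⟩ t (le_of_lt hlt)
    have hSetMN : SetMN (Subsemigroup.closure
        ({(malcev x y w t).1, (malcev x y w t).2} : Set S) : Set S) := by
      have := hEmpty (malcev x y w t).1 (malcev x y w t).2
      unfold NEdge at this
      push_neg at this
      exact this hneq
    apply hkey
    obtain ⟨n, hn, hmn⟩ := hSetMN
    exact ⟨n, hn, fun a ha b hb w' hw' => Or.inl (hmn a ha b hb w' hw')⟩
  rcases htne.lt_or_gt with hlt | hlt
  · exact key t m hlt hm heq
  · exact key m t hlt ht heq.symm
end

section
/- A finite monoid is pseudo-nilpotent if and only if it is Mal'cev nilpotent. -/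
section Aux
variable {M : Type*} [Monoid M]

/-- plain-word malcev run -/
def mrun (x y : M) (w : ℕ → M) : ℕ → M × M
  | 0 => (x, y)
  | n + 1 =>
      let p := mrun x y w n
      (p.1 * w n * p.2, p.2 * w n * p.1)

lemma mrun_succ (x y : M) (w : ℕ → M) (n : ℕ) :
    mrun x y w (n+1) = ((mrun x y w n).1 * w n * (mrun x y w n).2,
      (mrun x y w n).2 * w n * (mrun x y w n).1) := rfl

/-- pigeonhole: some power repeats, giving an idempotent power -/
lemma exists_idem_pow [Finite M] (x : M) : ∃ n, 1 ≤ n ∧ x ^ n * x ^ n = x ^ n := by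
  -- find i < j with x^i = x^j
  obtain ⟨i, j, hij, hEq⟩ : ∃ i j : ℕ, i ≠ j ∧ x ^ i = x ^ j := by
    have := Finite.exists_ne_map_eq_of_infinite (fun n : ℕ => x ^ n)
    obtain ⟨i, j, h1, h2⟩ := this
    exact ⟨i, j, h1, h2⟩
  wlog h : i < j generalizing i j
  · exact this j i hij.symm hEq.symm (by omega)
  set d := j - i with hd
  have hd1 : 1 ≤ d := by omega
  have key : ∀ m, i ≤ m → x ^ (m + d) = x ^ m := by
    intro m hm
    have : x ^ (m + d) = x ^ (m - i) * x ^ (i + d) := by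
      rw [← pow_add]; congr 1; omega
    rw [this]
    have : i + d = j := by omega
    rw [this, ← hEq, ← pow_add]
    congr 1; omega
  have key2 : ∀ k m, i ≤ m → x ^ (m + k * d) = x ^ m := by
    intro k
    induction k with
    | zero => simp
    | succ k ih =>
      intro m hm
      have : m + (k+1) * d = (m + k * d) + d := by ring
      rw [this, key _ (by omega), ih m hm]
  refine ⟨(i+1) * d, by nlinarith, ?_⟩
  rw [← pow_add]
  have : (i+1) * d + (i+1) * d = (i+1) * d + ((i+1)) * d := rfl
  rw [key2 (i+1) ((i+1)*d) (by nlinarith)]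

end Aux


section Green
variable {M : Type*} [Monoid M]

def Jle (x y : M) : Prop := ∃ u v, u * y * v = x
def Rin (x y : M) : Prop := ∃ u, y * u = x   -- x ∈ yM
def Lin (x y : M) : Prop := ∃ u, u * y = x   -- x ∈ My
def REq (x y : M) : Prop := Rin x y ∧ Rin y x
def LEq (x y : M) : Prop := Lin x y ∧ Lin y x

lemma Jle_refl (x : M) : Jle x x := ⟨1, 1, by simp⟩
lemma Jle_trans {x y z : M} (h1 : Jle x y) (h2 : Jle y z) : Jle x z := by
  obtain ⟨u, v, rfl⟩ := h1; obtain ⟨p, q, rfl⟩ := h2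
  exact ⟨u * p, q * v, by simp [mul_assoc]⟩
lemma Rin.jle {x y : M} (h : Rin x y) : Jle x y := by
  obtain ⟨u, rfl⟩ := h; exact ⟨1, u, by simp [mul_assoc]⟩
lemma Lin.jle {x y : M} (h : Lin x y) : Jle x y := by
  obtain ⟨u, rfl⟩ := h; exact ⟨u, 1, by simp⟩
lemma Rin_refl (x : M) : Rin x x := ⟨1, by simp⟩
lemma Rin_trans {x y z : M} (h1 : Rin x y) (h2 : Rin y z) : Rin x z := by
  obtain ⟨u, rfl⟩ := h1; obtain ⟨v, rfl⟩ := h2; exact ⟨v * u, by simp [mul_assoc]⟩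
lemma Lin_refl (x : M) : Lin x x := ⟨1, by simp⟩
lemma Lin_trans {x y z : M} (h1 : Lin x y) (h2 : Lin y z) : Lin x z := by
  obtain ⟨u, rfl⟩ := h1; obtain ⟨v, rfl⟩ := h2; exact ⟨u * v, by simp [mul_assoc]⟩
lemma REq.symm {x y : M} (h : REq x y) : REq y x := ⟨h.2, h.1⟩
lemma REq.trans {x y z : M} (h1 : REq x y) (h2 : REq y z) : REq x z :=
  ⟨Rin_trans h1.1 h2.1, Rin_trans h2.2 h1.2⟩
lemma LEq.symm {x y : M} (h : LEq x y) : LEq y x := ⟨h.2, h.1⟩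
lemma LEq.trans {x y z : M} (h1 : LEq x y) (h2 : LEq y z) : LEq x z :=
  ⟨Lin_trans h1.1 h2.1, Lin_trans h2.2 h1.2⟩
lemma REq.refl (x : M) : REq x x := ⟨Rin_refl x, Rin_refl x⟩
lemma LEq.refl (x : M) : LEq x x := ⟨Lin_refl x, Lin_refl x⟩

def idem (e : M) : Prop := e * e = e

/-- right identity on its L-class -/
lemma right_id {x e : M} (he : idem e) (h : Lin x e) : x * e = x := by
  obtain ⟨u, rfl⟩ := h; rw [mul_assoc, he]
/-- left identity on its R-class -/
lemma left_id {x e : M} (he : idem e) (h : Rin x e) : e * x = x := by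
  obtain ⟨u, rfl⟩ := h; rw [← mul_assoc, he]

/-- no-RZ uniqueness: R-equivalent idempotents give an RZ pair or are equal -/
lemma req_idem_eq
    (hnoRZ : ∀ u v : M, idem u → idem v → u * v = v → v * u = u → u = v)
    {u v : M} (hu : idem u) (hv : idem v) (h : REq u v) : u = v :=
  hnoRZ u v hu hv (left_id hu h.2) (left_id hv h.1)

lemma leq_idem_eq
    (hnoLZ : ∀ u v : M, idem u → idem v → u * v = u → v * u = v → u = v)
    {u v : M} (hu : idem u) (hv : idem v) (h : LEq u v) : u = v :=
  hnoLZ u v hu hv (right_id hv h.1) (right_id hu h.2)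

variable [Finite M]

/-- stability, right version: if x ≤_J x*y then x ∈ (x*y)M -/
lemma st1 {x y : M} (h : Jle x (x * y)) : Rin x (x * y) := by
  obtain ⟨u, v, huv⟩ := h
  -- x = u * (x*y) * v = u * x * (y*v)
  have base : u * x * (y * v) = x := by
    have : u * (x * y) * v = u * x * (y * v) := by simp [mul_assoc]
    rw [← this, huv]
  have iter : ∀ k, u ^ k * x * (y * v) ^ k = x := by
    intro k; induction k with
    | zero => simp
    | succ k ih =>
      have : u ^ (k+1) * x * (y*v) ^ (k+1) = u ^ k * (u * x * (y*v)) * (y*v) ^ k := by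
        rw [pow_succ, pow_succ']
        simp [mul_assoc]
      rw [this, base, ih]
  obtain ⟨n, hn1, hni⟩ := exists_idem_pow (M := M) (y * v)
  have hx : x * (y*v)^n = x := by
    have h1 : u ^ n * x * (y*v)^n = x := iter n
    calc x * (y*v)^n = (u^n * x * (y*v)^n) * (y*v)^n := by rw [h1]
    _ = u^n * x * ((y*v)^n * (y*v)^n) := by simp [mul_assoc]
    _ = u^n * x * (y*v)^n := by rw [hni]
    _ = x := h1
  -- leading y:   (y*v)^n = y * (v * (y*v)^(n-1))
  obtain ⟨m, rfl⟩ : ∃ m, n = m + 1 := ⟨n - 1, by omega⟩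
  refine ⟨v * (y*v)^m, ?_⟩
  have h2 : x * y * (v * (y*v)^m) = x * (y*v)^(m+1) := by
    rw [pow_succ']; simp [mul_assoc]
  rw [h2, hx]

/-- stability, left version: if y ≤_J x*y then y ∈ M(x*y) -/
lemma st2 {x y : M} (h : Jle y (x * y)) : Lin y (x * y) := by
  obtain ⟨u, v, huv⟩ := h
  have base : (u * x) * y * v = y := by
    have : u * (x * y) * v = (u * x) * y * v := by simp [mul_assoc]
    rw [← this, huv]
  have iter : ∀ k, (u*x) ^ k * y * v ^ k = y := by
    intro k; induction k with
    | zero => simp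
    | succ k ih =>
      have : (u*x) ^ (k+1) * y * v ^ (k+1) = (u*x) ^ k * ((u*x) * y * v) * v ^ k := by
        rw [pow_succ, pow_succ']
        simp [mul_assoc]
      rw [this, base, ih]
  obtain ⟨n, hn1, hni⟩ := exists_idem_pow (M := M) (u * x)
  have hx : (u*x)^n * y = y := by
    have h1 : (u*x) ^ n * y * v^n = y := iter n
    calc (u*x)^n * y = (u*x)^n * ((u*x)^n * y * v^n) := by rw [h1]
    _ = ((u*x)^n * (u*x)^n) * y * v^n := by simp [mul_assoc]
    _ = (u*x)^n * y * v^n := by rw [hni]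
    _ = y := h1
  obtain ⟨m, rfl⟩ : ∃ m, n = m + 1 := ⟨n - 1, by omega⟩
  refine ⟨(u*x)^m * u, ?_⟩
  have h2 : ((u*x)^m * u) * (x * y) = (u*x)^(m+1) * y := by
    rw [pow_succ]; simp [mul_assoc]
  rw [h2, hx]

end Green
section Iota
variable {M : Type*} [Monoid M] [Finite M]

lemma loopR {x u : M} (h : x = x * u) :
    ∃ e : M, idem e ∧ x * e = x ∧ Rin e u ∧ Lin e u := by
  obtain ⟨n, hn1, hni⟩ := exists_idem_pow (M := M) u
  have iter : ∀ k, x * u ^ k = x := by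
    intro k; induction k with
    | zero => simp
    | succ k ih => rw [pow_succ, ← mul_assoc, ih, ← h]
  obtain ⟨m, rfl⟩ : ∃ m, n = m + 1 := ⟨n - 1, by omega⟩
  exact ⟨u ^ (m+1), hni, iter (m+1),
    ⟨u ^ m, by rw [← pow_succ']⟩, ⟨u ^ m, by rw [← pow_succ]⟩⟩

lemma loopL {x u : M} (h : x = u * x) :
    ∃ e : M, idem e ∧ e * x = x ∧ Rin e u ∧ Lin e u := by
  obtain ⟨n, hn1, hni⟩ := exists_idem_pow (M := M) u
  have iter : ∀ k, u ^ k * x = x := by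
    intro k; induction k with
    | zero => simp
    | succ k ih => rw [pow_succ', mul_assoc, ih, ← h]
  obtain ⟨m, rfl⟩ : ∃ m, n = m + 1 := ⟨n - 1, by omega⟩
  exact ⟨u ^ (m+1), hni, iter (m+1),
    ⟨u ^ m, by rw [← pow_succ']⟩, ⟨u ^ m, by rw [← pow_succ]⟩⟩

/-- idempotent attached to a J-surviving product, right-handed -/
lemma prodIota {x y : M} (hJ : Jle x (x * y)) (hyx : Jle y x) :
    ∃ ι : M, idem ι ∧ x * ι = x ∧ REq ι y ∧ LEq ι x := by
  obtain ⟨z, hz⟩ := st1 hJ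
  have hz' : x = x * (y * z) := by rw [← mul_assoc, hz]
  obtain ⟨ι, hidem, hxι, hRu, hLu⟩ := loopR hz'
  -- ι ∈ yM
  have hιy : Rin ι y := by
    obtain ⟨w, hw⟩ := hRu
    exact ⟨z * w, by rw [← mul_assoc, ← hw]⟩
  have hxJι : Jle x ι := ⟨x, 1, by rw [mul_one, hxι]⟩
  -- y ∈ ιM via st1
  have hyι : Rin y ι := by
    obtain ⟨w, hw⟩ := hιy
    have : Jle y (y * w) := by
      rw [hw]; exact Jle_trans hyx hxJι
    have h' := st1 this
    rw [hw] at h'; exact h'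
  -- ι ∈ Mx via st2
  have hιMx : Lin ι x := by
    have : Jle ι (x * ι) := by
      rw [hxι]; exact Jle_trans (Rin.jle hιy) hyx
    have h' := st2 this
    rw [hxι] at h'; exact h'
  exact ⟨ι, hidem, hxι, ⟨hιy, hyι⟩, ⟨hιMx, ⟨x, hxι⟩⟩⟩

/-- idempotent attached to a J-surviving product, left-handed -/
lemma prodIotaL {x y : M} (hJ : Jle y (x * y)) (hxy : Jle x y) :
    ∃ κ : M, idem κ ∧ κ * y = y ∧ LEq κ x ∧ REq κ y := by
  obtain ⟨z, hz⟩ := st2 hJ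
  have hz' : y = (z * x) * y := by rw [mul_assoc, hz]
  obtain ⟨κ, hidem, hκy, hRu, hLu⟩ := loopL hz'
  have hκx : Lin κ x := by
    obtain ⟨w, hw⟩ := hLu
    exact ⟨w * z, by rw [mul_assoc, ← hw]⟩
  have hyJκ : Jle y κ := ⟨1, y, by rw [one_mul, hκy]⟩
  have hxκ : Lin x κ := by
    obtain ⟨w, hw⟩ := hκx
    have : Jle x (w * x) := by
      rw [hw]; exact Jle_trans hxy hyJκ
    have h' := st2 this
    rw [hw] at h'; exact h'
  have hκMy : Rin κ y := by
    have : Jle κ (κ * y) := by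
      rw [hκy]; exact Jle_trans (Lin.jle hκx) hxy
    have h' := st1 this
    rw [hκy] at h'; exact h'
  exact ⟨κ, hidem, hκy, ⟨hκx, hxκ⟩, ⟨hκMy, ⟨y, hκy⟩⟩⟩

end Iota
set_option linter.unusedSectionVars false
section CycSec
variable {M : Type*} [Monoid M] [Finite M]

structure Cyc (a b c : ℕ → M) (P : ℕ) : Prop where
  hP : 1 ≤ P
  ha : ∀ j, a (j+1) = a j * c j * b j
  hb : ∀ j, b (j+1) = b j * c j * a j
  pa : ∀ j, a (j+P) = a j
  pb : ∀ j, b (j+P) = b j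
  pc : ∀ j, c (j+P) = c j
  hne : ∀ j, a j ≠ b j

namespace Cyc
variable {a b c : ℕ → M} {P : ℕ} (h : Cyc a b c P)
include h

lemma swap : Cyc b a c P := ⟨h.hP, h.hb, h.ha, h.pb, h.pa, h.pc, fun j => (h.hne j).symm⟩

lemma pa_mul : ∀ k s, a (s + k*P) = a s := by
  intro k; induction k with
  | zero => simp
  | succ k ih =>
    intro s
    rw [show s + (k+1)*P = (s + k*P) + P by ring, h.pa, ih]

lemma pb_mul : ∀ k s, b (s + k*P) = b s := h.swap.pa_mul

lemma chainRa : ∀ u s, ∃ z, a (s + u) = a s * z := by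
  intro u; induction u with
  | zero => exact fun s => ⟨1, by simp⟩
  | succ u ih =>
    intro s
    obtain ⟨z, hz⟩ := ih s
    refine ⟨z * (c (s+u) * b (s+u)), ?_⟩
    rw [show s + (u+1) = (s+u) + 1 by ring, h.ha, hz]
    simp [mul_assoc]

lemma chainRb : ∀ u s, ∃ z, b (s + u) = b s * z := h.swap.chainRa

/-- all a's and b's are mutually R-comparable downward -/
lemma rinA : ∀ s t, Rin (a t) (a s) := by
  intro s t
  obtain ⟨z, hz⟩ := h.chainRa (t + s*P - s) s
  rw [show s + (t + s*P - s) = t + s*P by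
      have := h.hP; have : s ≤ t + s * P := by nlinarith
      omega, h.pa_mul] at hz
  exact ⟨z, hz.symm⟩

lemma rinB : ∀ s t, Rin (b t) (b s) := h.swap.rinA

-- left two-step chains
lemma two_a : ∀ t, ∃ z, a (t+2) = z * a t := by
  intro t
  refine ⟨a (t+1) * c (t+1) * (b t * c t), ?_⟩
  rw [show t+2 = (t+1)+1 by ring, h.ha, h.hb]
  simp [mul_assoc]

lemma two_b : ∀ t, ∃ z, b (t+2) = z * b t := h.swap.two_a

lemma even_a : ∀ u t, ∃ z, a (t + 2*u) = z * a t := by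
  intro u; induction u with
  | zero => exact fun t => ⟨1, by simp⟩
  | succ u ih =>
    intro t
    obtain ⟨z, hz⟩ := h.two_a (t + 2*u)
    obtain ⟨z', hz'⟩ := ih t
    refine ⟨z * z', ?_⟩
    rw [show t + 2*(u+1) = (t + 2*u) + 2 by ring, hz, hz', mul_assoc]

lemma even_b : ∀ u t, ∃ z, b (t + 2*u) = z * b t := h.swap.even_a

lemma odd_a : ∀ u t, ∃ z, a (t + 2*u + 1) = z * b t := by
  intro u t
  obtain ⟨z, hz⟩ := h.even_a u (t+1)
  refine ⟨z * (a t * c t), ?_⟩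
  rw [show t + 2*u + 1 = (t+1) + 2*u by ring, hz, h.ha]
  simp [mul_assoc]

lemma odd_b : ∀ u t, ∃ z, b (t + 2*u + 1) = z * a t := h.swap.odd_a

/-- b s ∈ M · a (s+1) -/
lemma lin_b_aSucc : ∀ s, Lin (b s) (a (s+1)) := by
  intro s
  obtain ⟨z, hz⟩ := h.odd_b (P-1) (s+1)
  rw [show (s+1) + 2*(P-1) + 1 = s + 2*P by have := h.hP; omega] at hz
  rw [h.pb_mul 2 s] at hz
  exact ⟨z, hz.symm⟩

lemma lin_a_bSucc : ∀ s, Lin (a s) (b (s+1)) := h.swap.lin_b_aSucc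

end Cyc
end CycSec
section CycSec2
variable {M : Type*} [Monoid M] [Finite M]

namespace Cyc
variable {a b c : ℕ → M} {P : ℕ} (h : Cyc a b c P)
include h

lemma reqA : ∀ s t, REq (a s) (a t) := fun s t => ⟨h.rinA t s, h.rinA s t⟩
lemma reqB : ∀ s t, REq (b s) (b t) := h.swap.reqA

lemma leq_aSucc_b : ∀ s, LEq (a (s+1)) (b s) := by
  intro s
  exact ⟨⟨a s * c s, (h.ha s).symm⟩, h.lin_b_aSucc s⟩
lemma leq_bSucc_a : ∀ s, LEq (b (s+1)) (a s) := h.swap.leq_aSucc_b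

lemma jle_a_a : ∀ t s, Jle (a t) (a s) := fun t s => (h.rinA s t).jle
lemma jle_b_b : ∀ t s, Jle (b t) (b s) := h.swap.jle_a_a
lemma jle_a_b : ∀ t s, Jle (a t) (b s) := by
  intro t s
  refine Jle_trans (h.jle_a_a t (s+1)) ⟨a s * c s, 1, ?_⟩
  rw [mul_one, ← h.ha]
lemma jle_b_a : ∀ t s, Jle (b t) (a s) := h.swap.jle_a_b

/-- position of T' j = b j * c j -/
lemma reqT' : ∀ j i, REq (b j * c j) (b i) := by
  intro j i
  constructor
  · exact Rin_trans ⟨c j, rfl⟩ (h.rinB i j)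
  · exact Rin_trans (h.rinB (j+1) i) ⟨a j, (h.hb j).symm⟩
lemma reqT : ∀ j i, REq (a j * c j) (a i) := h.swap.reqT'

/-- position of S j = c j * b j -/
lemma leqS : ∀ j, LEq (c j * b j) (b j) := by
  intro j
  constructor
  · exact ⟨c j, rfl⟩
  · refine Lin_trans (h.lin_b_aSucc j) ⟨a j, ?_⟩
    rw [← mul_assoc, ← h.ha]
lemma leqS' : ∀ j, LEq (c j * a j) (a j) := h.swap.leqS

lemma parity : ∀ k, (LEq (a k) (a 0) ∧ LEq (b k) (b 0)) ∨
    (LEq (a k) (b 0) ∧ LEq (b k) (a 0)) := by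
  intro k; induction k with
  | zero => exact Or.inl ⟨LEq.refl _, LEq.refl _⟩
  | succ k ih =>
    rcases ih with ⟨h1, h2⟩ | ⟨h1, h2⟩
    · exact Or.inr ⟨LEq.trans (h.leq_aSucc_b k) h2, LEq.trans (h.leq_bSucc_a k) h1⟩
    · exact Or.inl ⟨LEq.trans (h.leq_aSucc_b k) h2, LEq.trans (h.leq_bSucc_a k) h1⟩

lemma distinctH (hd : ¬(REq (a 0) (b 0) ∧ LEq (a 0) (b 0))) :
    ∀ k, ¬(REq (a k) (b k) ∧ LEq (a k) (b k)) := by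
  intro k ⟨hR, hL⟩
  refine hd ⟨REq.trans (REq.trans (h.reqA 0 k) hR) (h.reqB k 0), ?_⟩
  rcases h.parity k with ⟨h1, h2⟩ | ⟨h1, h2⟩
  · exact LEq.trans (LEq.trans h1.symm hL) h2
  · exact LEq.trans (LEq.trans h2.symm hL.symm) h1

end Cyc

/-- translation of a step across H-equivalent pairs -/
lemma transH {a0 x x' y y' cc : M}
    (hxR : REq x' x) (hxL : LEq x' x) (hyR : REq y' y) (hyL : LEq y' y)
    (hxa : Jle x a0) (hya : Jle y a0) (h3 : Jle a0 (x * cc * y)) :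
    (REq (x' * cc * y') (x * cc * y) ∧ LEq (x' * cc * y') (x * cc * y)) := by
  -- step A : vary y
  obtain ⟨t, ht⟩ := hyR.1
  obtain ⟨t', ht'⟩ := hyR.2
  have hA1 : x * cc * y' = (x * cc * y) * t := by rw [mul_assoc (x*cc), ← ht]
  have hA2 : x * cc * y = (x * cc * y') * t' := by rw [mul_assoc (x*cc), ← ht']
  have hAR : REq (x * cc * y') (x * cc * y) := ⟨⟨t, hA1.symm⟩, ⟨t', hA2.symm⟩⟩
  have hJy' : Jle y' y := by
    obtain ⟨u, hu⟩ := hyR.1; exact ⟨1, u, by rw [one_mul, hu]⟩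
  have hJmid : Jle a0 (x * cc * y') := Jle_trans h3 hAR.2.jle
  have hAL : LEq (x * cc * y') y' := by
    constructor
    · exact ⟨x * cc, rfl⟩
    · have hst : Jle y' ((x * cc) * y') :=
        Jle_trans (Jle_trans (Jle_trans hJy' hya) h3) hAR.2.jle
      exact st2 hst
  have hALorig : LEq (x * cc * y) y := by
    constructor
    · exact ⟨x * cc, rfl⟩
    · exact st2 (Jle_trans hya h3)
  have hALfull : LEq (x * cc * y') (x * cc * y) :=
    LEq.trans (LEq.trans hAL hyL) hALorig.symm
  -- step B : vary x
  obtain ⟨s, hs⟩ := hxL.1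
  obtain ⟨s', hs'⟩ := hxL.2
  have hB1 : x' * cc * y' = s * (x * cc * y') := by
    rw [← mul_assoc, ← mul_assoc, ← hs]
  have hB2 : x * cc * y' = s' * (x' * cc * y') := by
    rw [← mul_assoc, ← mul_assoc, ← hs']
  have hBL : LEq (x' * cc * y') (x * cc * y') := ⟨⟨s, hB1.symm⟩, ⟨s', hB2.symm⟩⟩
  have hJx' : Jle x' x := by
    obtain ⟨u, hu⟩ := hxL.1; exact ⟨u, 1, by rw [mul_one, hu]⟩
  have hBR : REq (x' * cc * y') x' := by
    constructor
    · exact ⟨cc * y', by rw [← mul_assoc]⟩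
    · have hst : Jle x' (x' * (cc * y')) := by
        rw [← mul_assoc]
        exact Jle_trans (Jle_trans (Jle_trans hJx' hxa) hJmid) hBL.2.jle
      have := st1 hst
      rwa [← mul_assoc] at this
  have hRorig : REq (x * cc * y) x := by
    constructor
    · exact ⟨cc * y, by rw [← mul_assoc]⟩
    · have hst : Jle x (x * (cc * y)) := by
        rw [← mul_assoc]; exact Jle_trans hxa h3
      have := st1 hst
      rwa [← mul_assoc] at this
  exact ⟨REq.trans (REq.trans hBR hxR) hRorig.symm,
    LEq.trans hBL hALfull⟩

end CycSec2
section E1sec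
variable {M : Type*} [Monoid M] [Finite M]

namespace Cyc
variable {a b c : ℕ → M} {P : ℕ} (h : Cyc a b c P)
include h

/-- main replay lemma: an entry idempotent aligned as `γ = ε_{j0}` yields a
never-equalizing run from `(b j0, 1)`. -/
lemma E1
    (hnoLZ : ∀ u v : M, idem u → idem v → u * v = u → v * u = v → u = v)
    (hnoRZ : ∀ u v : M, idem u → idem v → u * v = v → v * u = u → u = v)
    (j0 : ℕ) (e : M) (he : idem e)
    (heR : REq e (a 0)) (heL : LEq e (a j0))
    (hd : ¬(REq (a 0) (b 0) ∧ LEq (a 0) (b 0))) :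
    ∃ (x : M) (w : ℕ → M), ∀ k, 1 ≤ k →
      (mrun x 1 w k).1 ≠ (mrun x 1 w k).2 := by
  have hnH := h.distinctH hd
  set T' : M := b j0 * c j0 with hT'
  set S : M := c j0 * b j0 with hS
  -- entry H-matches
  have hT'R : REq T' (b (j0+1)) := h.reqT' j0 (j0+1)
  have hT'L : LEq T' (b (j0+1)) := by
    have hJ : Jle T' (T' * a j0) := by
      rw [← h.hb j0]; exact hT'R.1.jle
    have hyx : Jle (a j0) T' :=
      Jle_trans (h.jle_a_b j0 (j0+1)) hT'R.2.jle
    obtain ⟨ι, hιi, hTι, hιa, hιT⟩ := prodIota hJ hyx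
    have hιe : ι = e :=
      req_idem_eq hnoRZ hιi he (REq.trans hιa (REq.trans (h.reqA j0 0) heR.symm))
    subst hιe
    exact LEq.trans (LEq.trans hιT.symm heL) (h.leq_bSucc_a j0).symm
  have hSL : LEq S (a (j0+1)) :=
    LEq.trans (h.leqS j0) (h.leq_aSucc_b j0).symm
  have hSR : REq S (a (j0+1)) := by
    have hJ : Jle S (a j0 * S) := by
      have : a j0 * S = a (j0+1) := by rw [hS, ← mul_assoc, ← h.ha]
      rw [this]; exact hSL.1.jle
    have hxy : Jle (a j0) S :=
      Jle_trans (h.jle_a_a j0 (j0+1)) hSL.2.jle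
    obtain ⟨κ, hκi, hκS, hκa, hκSr⟩ := prodIotaL hJ hxy
    have hκe : κ = e := leq_idem_eq hnoLZ hκi he (LEq.trans hκa heL.symm)
    subst hκe
    exact REq.trans hκSr.symm (REq.trans heR (h.reqA 0 (j0+1)))
  -- the run
  refine ⟨b j0, fun k => c (j0 + k), ?_⟩
  set w : ℕ → M := fun k => c (j0 + k) with hw
  set p : ℕ → M × M := mrun (b j0) 1 w with hp
  have hbase : p 1 = (T', S) := by
    show ((b j0) * w 0 * 1, 1 * w 0 * (b j0)) = (T', S)
    simp [hw, hT', hS]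
  have inv : ∀ k, (REq (p (k+1)).1 (b (j0+k+1)) ∧ LEq (p (k+1)).1 (b (j0+k+1))) ∧
      (REq (p (k+1)).2 (a (j0+k+1)) ∧ LEq (p (k+1)).2 (a (j0+k+1))) := by
    intro k; induction k with
    | zero =>
      rw [hbase]
      exact ⟨⟨hT'R, hT'L⟩, ⟨hSR, hSL⟩⟩
    | succ k ih =>
      obtain ⟨⟨h1R, h1L⟩, ⟨h2R, h2L⟩⟩ := ih
      have hstep : p (k+2) = ((p (k+1)).1 * w (k+1) * (p (k+1)).2,
          (p (k+1)).2 * w (k+1) * (p (k+1)).1) := rfl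
      have hwv : w (k+1) = c (j0+k+1) := by rw [hw]; ring_nf
      constructor
      · -- first coordinate matches b (j0+k+2)
        have hb2 : b (j0+k+1) * c (j0+k+1) * a (j0+k+1) = b (j0+k+2) :=
          (h.hb (j0+k+1)).symm
        have := transH (a0 := a 0) h1R h1L h2R h2L
          (h.jle_b_a (j0+k+1) 0) (h.jle_a_a (j0+k+1) 0)
          (by rw [hb2]; exact h.jle_a_b 0 (j0+k+2))
        rw [hb2] at this
        rw [hstep, hwv]
        exact this
      · have ha2 : a (j0+k+1) * c (j0+k+1) * b (j0+k+1) = a (j0+k+2) :=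
          (h.ha (j0+k+1)).symm
        have := transH (a0 := a 0) h2R h2L h1R h1L
          (h.jle_a_a (j0+k+1) 0) (h.jle_b_a (j0+k+1) 0)
          (by rw [ha2]; exact h.jle_a_a 0 (j0+k+2))
        rw [ha2] at this
        rw [hstep, hwv]
        exact this
  intro k hk heq
  obtain ⟨k', rfl⟩ : ∃ k', k = k' + 1 := ⟨k - 1, by omega⟩
  obtain ⟨⟨h1R, h1L⟩, ⟨h2R, h2L⟩⟩ := inv k'
  refine hnH (j0+k'+1) ⟨?_, ?_⟩
  · exact REq.trans (REq.trans h2R.symm (heq ▸ REq.refl _)) (heq ▸ h1R)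
  · exact LEq.trans h2L.symm (heq ▸ h1L)

end Cyc
end E1sec
section GroupSec
variable {M : Type*} [Monoid M] [Finite M]

namespace Cyc
variable {a b c : ℕ → M} {P : ℕ} (h : Cyc a b c P)
include h

/-- single H-class (group) case -/
lemma Egroup
    (hnoRZ : ∀ u v : M, idem u → idem v → u * v = v → v * u = u → u = v)
    (e : M) (he : idem e) (heR : REq e (a 0)) (heL : LEq e (a 0))
    (hsR : REq (a 0) (b 0)) (hsL : LEq (a 0) (b 0)) :
    ∃ (x : M) (w : ℕ → M), ∀ k, 1 ≤ k →
      (mrun x 1 w k).1 ≠ (mrun x 1 w k).2 := by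
  classical
  set Hcl : M → Prop := fun z => REq z e ∧ LEq z e with hHcl
  have hce : Hcl e := ⟨REq.refl e, LEq.refl e⟩
  have idl : ∀ z, Hcl z → e * z = z := fun z hz => left_id he hz.1.1
  have idr : ∀ z, Hcl z → z * e = z := fun z hz => right_id he hz.2.1
  have jlee : ∀ z, Hcl z → Jle z e := fun z hz => hz.1.1.jle
  -- closure under multiplication
  have Hmul : ∀ z w, Hcl z → Hcl w → Hcl (z * w) := by
    intro z w hz hw
    have hJezw : Jle e (z * w) := by
      obtain ⟨u, hu⟩ := hz.2.2
      obtain ⟨v, hv⟩ := hw.1.2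
      exact ⟨u, v, by rw [← mul_assoc u z w, mul_assoc (u*z) w v, hu, hv, he]⟩
    constructor
    · constructor
      · obtain ⟨z1, hz1⟩ := hz.1.1
        exact ⟨z1 * w, by rw [← mul_assoc, hz1]⟩
      · have h1 : Jle z (z * w) := Jle_trans (jlee z hz) hJezw
        exact Rin_trans hz.1.2 (st1 h1)
    · constructor
      · obtain ⟨w1, hw1⟩ := hw.2.1
        exact ⟨z * w1, by rw [mul_assoc, hw1]⟩
      · have h1 : Jle w (z * w) := Jle_trans (jlee w hw) hJezw
        exact Lin_trans hw.2.2 (st2 h1)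
  -- membership of cycle elements
  have memA : ∀ k, Hcl (a k) := by
    intro k
    constructor
    · exact REq.trans (h.reqA k 0) heR.symm
    · rcases h.parity k with ⟨h1, _⟩ | ⟨h1, _⟩
      · exact LEq.trans h1 heL.symm
      · exact LEq.trans (LEq.trans h1 hsL.symm) heL.symm
  have memB : ∀ k, Hcl (b k) := by
    intro k
    constructor
    · exact REq.trans (REq.trans (h.reqB k 0) hsR.symm) heR.symm
    · rcases h.parity k with ⟨_, h2⟩ | ⟨_, h2⟩
      · exact LEq.trans (LEq.trans h2 hsL.symm) heL.symm
      · exact LEq.trans h2 heL.symm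
  -- conjugated middle letters
  have memC : ∀ k, Hcl (e * c k * e) := by
    intro k
    have hkey : a (k+1) = a k * (e * c k * e) * b k := by
      rw [h.ha]
      rw [show a k * (e * c k * e) * b k = (a k * e) * c k * (e * b k) by
        simp [mul_assoc]]
      rw [idr _ (memA k), idl _ (memB k)]
    have hJ : Jle e (e * c k * e) := by
      have h1 : Jle e (a (k+1)) := Jle_trans heR.1.jle (h.jle_a_a 0 (k+1))
      exact Jle_trans h1 ⟨a k, b k, by rw [← hkey]⟩
    constructor
    · constructor
      · exact ⟨c k * e, by simp [mul_assoc]⟩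
      · have h1 : Jle e (e * (c k * e)) := by rw [← mul_assoc]; exact hJ
        have := st1 h1
        rwa [← mul_assoc] at this
    · constructor
      · exact ⟨e * c k, rfl⟩
      · have h1 : Jle e ((e * c k) * e) := hJ
        exact st2 h1
  have hcyc : ∀ k, a (k+1) = a k * (e * c k * e) * b k := by
    intro k
    rw [h.ha]
    rw [show a k * (e * c k * e) * b k = (a k * e) * c k * (e * b k) by
      simp [mul_assoc]]
    rw [idr _ (memA k), idl _ (memB k)]
  have hcycb : ∀ k, b (k+1) = b k * (e * c k * e) * a k := by
    intro k
    rw [h.hb]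
    rw [show b k * (e * c k * e) * a k = (b k * e) * c k * (e * a k) by
      simp [mul_assoc]]
    rw [idr _ (memB k), idl _ (memA k)]
  -- inverses
  have hinv : ∀ z, Hcl z → ∃ z', Hcl z' ∧ z * z' = e ∧ z' * z = e := by
    intro z hz
    obtain ⟨n, hn1, hni⟩ := exists_idem_pow (M := M) z
    have hpow : ∀ m, 1 ≤ m → Hcl (z ^ m) := by
      intro m hm
      induction m with
      | zero => omega
      | succ m ih =>
        rcases Nat.eq_or_lt_of_le hm with hh | hh
        · have hm0 : m = 0 := by omega
          subst hm0; simpa using hz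
        · have := ih (by omega)
          rw [pow_succ]
          exact Hmul _ _ this hz
    have hzn : z ^ n = e := by
      refine req_idem_eq hnoRZ hni he (hpow n hn1).1
    rcases Nat.eq_or_lt_of_le hn1 with hh | hh
    · have hze : z = e := by
        have := hzn; rw [← hh, pow_one] at this; exact this
      exact ⟨e, hce, by rw [hze, he], by rw [hze, he]⟩
    · obtain ⟨m, rfl⟩ : ∃ m, n = m + 2 := ⟨n - 2, by omega⟩
      refine ⟨z ^ (m+1), hpow (m+1) (by omega), ?_, ?_⟩
      · rw [← pow_succ', hzn]
      · rw [← pow_succ, hzn]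
  -- the subtype group
  let G := { z : M // Hcl z }
  letI : Mul G := ⟨fun u v => ⟨u.1 * v.1, Hmul _ _ u.2 v.2⟩⟩
  letI : One G := ⟨⟨e, hce⟩⟩
  have mulval : ∀ u v : G, (u * v).1 = u.1 * v.1 := fun _ _ => rfl
  have oneval : (1 : G).1 = e := rfl
  letI : Monoid G :=
    { mul_assoc := fun u v w => Subtype.ext (mul_assoc u.1 v.1 w.1)
      one_mul := fun u => Subtype.ext (idl u.1 u.2)
      mul_one := fun u => Subtype.ext (idr u.1 u.2) }
  letI : Inv G := ⟨fun u => ⟨Classical.choose (hinv u.1 u.2),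
      (Classical.choose_spec (hinv u.1 u.2)).1⟩⟩
  letI : Div G := ⟨fun u v => u * v⁻¹⟩
  letI : Group G :=
    { inv_mul_cancel := fun u =>
        Subtype.ext ((Classical.choose_spec (hinv u.1 u.2)).2.2) }
  set A : ℕ → G := fun k => ⟨a k, memA k⟩ with hA
  set B : ℕ → G := fun k => ⟨b k, memB k⟩ with hB
  set C' : ℕ → G := fun k => ⟨e * c k * e, memC k⟩ with hC
  have relA : ∀ k, A (k+1) = A k * C' k * B k := fun k => Subtype.ext (hcyc k)
  have relB : ∀ k, B (k+1) = B k * C' k * A k := fun k => Subtype.ext (hcycb k)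
  set α : ℕ → G := fun k => (B k)⁻¹ * A k with hα
  have hαne : ∀ k, α k ≠ 1 := by
    intro k hk
    have : A k = B k := by
      have := congrArg (fun z => B k * z) hk
      simpa [hα, mul_assoc] using this
    exact h.hne k (congrArg Subtype.val this)
  have αrec : ∀ k, (C' k * A k) * α (k+1) = α k * (C' k * A k) * (α k)⁻¹ := by
    intro k
    rw [hα]
    simp only [relA, relB]
    group
  -- the run inside G
  set g : ℕ → G := fun k => C' k * A k with hg
  set q : ℕ → G × G := fun k => Nat.rec ((g 0) * (α 0)⁻¹, (α 0)⁻¹ * (g 0))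
      (fun k qk => (qk.1 * (g (k+1) * qk.1⁻¹) * qk.2,
                    qk.2 * (g (k+1) * qk.1⁻¹) * qk.1)) k with hq
  have hq0 : q 0 = ((g 0) * (α 0)⁻¹, (α 0)⁻¹ * (g 0)) := rfl
  have hqs : ∀ k, q (k+1) = ((q k).1 * (g (k+1) * (q k).1⁻¹) * (q k).2,
      (q k).2 * (g (k+1) * (q k).1⁻¹) * (q k).1) := fun k => rfl
  have qinv : ∀ k, (q k).2 * α (k+1) = (q k).1 := by
    intro k; induction k with
    | zero =>
      rw [hq0]
      show (α 0)⁻¹ * (g 0) * α 1 = (g 0) * (α 0)⁻¹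
      have hgk : g 0 = C' 0 * A 0 := rfl
      rw [hgk, mul_assoc, αrec 0]
      group
    | succ k ih =>
      rw [hqs k]
      show (q k).2 * (g (k+1) * (q k).1⁻¹) * (q k).1 * α (k+2)
        = (q k).1 * (g (k+1) * (q k).1⁻¹) * (q k).2
      rw [← ih]
      have hrec := αrec (k+1)
      rw [show k+1+1 = k+2 from rfl] at hrec
      have hgk : g (k+1) = C' (k+1) * A (k+1) := rfl
      rw [hgk]
      calc (q k).2 * (C' (k+1) * A (k+1) * ((q k).2 * α (k+1))⁻¹) *
            ((q k).2 * α (k+1)) * α (k+2)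
          = (q k).2 * (C' (k+1) * A (k+1) * α (k+2)) *
            (((q k).2 * α (k+1))⁻¹ * ((q k).2 * α (k+1))) * 1 := by group
        _ = (q k).2 * (α (k+1) * (C' (k+1) * A (k+1)) * (α (k+1))⁻¹) *
            (((q k).2 * α (k+1))⁻¹ * ((q k).2 * α (k+1))) * 1 := by
            rw [hrec]
        _ = (q k).2 * α (k+1) * (C' (k+1) * A (k+1) * ((q k).2 * α (k+1))⁻¹) *
            (q k).2 := by group
  have qne : ∀ k, (q k).1 ≠ (q k).2 := by
    intro k heq
    have h1 := qinv k
    rw [heq] at h1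
    have : α (k+1) = 1 := by
      have := congrArg (fun z => ((q k).2)⁻¹ * z) h1
      simpa [mul_assoc] using this
    exact hαne (k+1) this
  -- transfer to M
  refine ⟨(g 0 : G).1, fun k => if k = 0 then ((α 0)⁻¹ : G).1
      else ((g k * (q (k-1)).1⁻¹ : G)).1, ?_⟩
  set w : ℕ → M := fun k => if k = 0 then ((α 0)⁻¹ : G).1
      else ((g k * (q (k-1)).1⁻¹ : G)).1 with hwdef
  have match1 : ∀ k, mrun ((g 0 : G).1) 1 w (k+1) = ((q k).1.1, (q k).2.1) := by
    intro k; induction k with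
    | zero =>
      show ((g 0 : G).1 * w 0 * 1, 1 * w 0 * (g 0 : G).1) = _
      rw [hq0]
      simp [hwdef, mulval]
    | succ k ih =>
      show ((mrun ((g 0 : G).1) 1 w (k+1)).1 * w (k+1) * (mrun _ 1 w (k+1)).2,
            (mrun _ 1 w (k+1)).2 * w (k+1) * (mrun _ 1 w (k+1)).1) = _
      rw [ih, hqs k]
      have hwk : w (k+1) = ((g (k+1) * (q k).1⁻¹ : G)).1 := by
        simp [hwdef]
      rw [hwk]
      simp [mulval]
  intro k hk heq
  obtain ⟨k', rfl⟩ : ∃ k', k = k' + 1 := ⟨k - 1, by omega⟩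
  rw [match1 k'] at heq
  exact qne k' (Subtype.ext heq)

end Cyc
end GroupSec
section Dispatch
variable {M : Type*} [Monoid M] [Finite M]

lemma runLZ {u v : M} (hu : idem u) (hv : idem v) (huv : u * v = u)
    (hvu : v * u = v) (hne : u ≠ v) :
    ∃ (x : M) (w : ℕ → M), ∀ k, 1 ≤ k →
      (mrun x 1 w k).1 ≠ (mrun x 1 w k).2 := by
  refine ⟨u, fun k => if k = 0 then v else 1, ?_⟩
  set w : ℕ → M := fun k => if k = 0 then v else 1 with hw
  have key : ∀ k, mrun u 1 w (k+1) = (u, v) := by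
    intro k; induction k with
    | zero =>
      show (u * w 0 * 1, 1 * w 0 * u) = (u, v)
      simp [hw, huv, hvu]
    | succ k ih =>
      show ((mrun u 1 w (k+1)).1 * w (k+1) * (mrun u 1 w (k+1)).2,
            (mrun u 1 w (k+1)).2 * w (k+1) * (mrun u 1 w (k+1)).1) = (u, v)
      rw [ih]
      simp [hw, huv, hvu]
  intro k hk
  obtain ⟨k', rfl⟩ : ∃ k', k = k' + 1 := ⟨k - 1, by omega⟩
  rw [key k']
  exact hne

lemma runRZ {u v : M} (hu : idem u) (hv : idem v) (huv : u * v = v)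
    (hvu : v * u = u) (hne : u ≠ v) :
    ∃ (x : M) (w : ℕ → M), ∀ k, 1 ≤ k →
      (mrun x 1 w k).1 ≠ (mrun x 1 w k).2 := by
  refine ⟨u, fun k => if k = 0 then v else 1, ?_⟩
  set w : ℕ → M := fun k => if k = 0 then v else 1 with hw
  have key : ∀ k, mrun u 1 w (k+1) = (v, u) ∨ mrun u 1 w (k+1) = (u, v) := by
    intro k; induction k with
    | zero =>
      left
      show (u * w 0 * 1, 1 * w 0 * u) = (v, u)
      simp [hw, huv, hvu]
    | succ k ih =>
      have hstep : mrun u 1 w (k+2) = ((mrun u 1 w (k+1)).1 * w (k+1) * (mrun u 1 w (k+1)).2,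
            (mrun u 1 w (k+1)).2 * w (k+1) * (mrun u 1 w (k+1)).1) := rfl
      rcases ih with hh | hh
      · right; rw [hstep, hh]; simp [hw, huv, hvu]
      · left; rw [hstep, hh]; simp [hw, huv, hvu]
  intro k hk
  obtain ⟨k', rfl⟩ : ∃ k', k = k' + 1 := ⟨k - 1, by omega⟩
  rcases key k' with hh | hh <;> rw [hh]
  · exact hne.symm
  · exact hne

namespace Cyc
variable {a b c : ℕ → M} {P : ℕ} (h : Cyc a b c P)
include h

lemma cycle_to_run
    (hnoLZ : ∀ u v : M, idem u → idem v → u * v = u → v * u = v → u = v)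
    (hnoRZ : ∀ u v : M, idem u → idem v → u * v = v → v * u = u → u = v)
    (halive : Jle (a 0) (a 0 * a 0) ∨ Jle (a 0) (a 0 * b 0) ∨
      Jle (a 0) (b 0 * a 0) ∨ Jle (a 0) (b 0 * b 0)) :
    ∃ (x : M) (w : ℕ → M), ∀ k, 1 ≤ k →
      (mrun x 1 w k).1 ≠ (mrun x 1 w k).2 := by
  by_cases hs : REq (a 0) (b 0) ∧ LEq (a 0) (b 0)
  · -- single H-class : group case
    have hee : ∃ e : M, idem e ∧ REq e (a 0) ∧ LEq e (a 0) := by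
      rcases halive with hJ | hJ | hJ | hJ
      · obtain ⟨ι, hi, _, hR, hL⟩ := prodIota hJ (Jle_refl (a 0))
        exact ⟨ι, hi, hR, hL⟩
      · obtain ⟨ι, hi, _, hR, hL⟩ := prodIota hJ (h.jle_b_a 0 0)
        exact ⟨ι, hi, REq.trans hR hs.1.symm, hL⟩
      · obtain ⟨ι, hi, _, hR, hL⟩ := prodIota
          (Jle_trans (h.jle_b_a 0 0) hJ) (h.jle_a_b 0 0)
        exact ⟨ι, hi, hR, LEq.trans hL hs.2.symm⟩
      · obtain ⟨ι, hi, _, hR, hL⟩ := prodIota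
          (Jle_trans (h.jle_b_a 0 0) hJ) (Jle_refl (b 0))
        exact ⟨ι, hi, REq.trans hR hs.1.symm, LEq.trans hL hs.2.symm⟩
    obtain ⟨e, he, heR, heL⟩ := hee
    exact h.Egroup hnoRZ e he heR heL hs.1 hs.2
  · -- distinct H-classes : replay case
    rcases halive with hJ | hJ | hJ | hJ
    · obtain ⟨ι, hi, _, hR, hL⟩ := prodIota hJ (Jle_refl (a 0))
      exact h.E1 hnoLZ hnoRZ 0 ι hi hR hL hs
    · -- δ = ε 0 : use swapped cycle at j0 = P-1
      obtain ⟨ι, hi, _, hR, hL⟩ := prodIota hJ (h.jle_b_a 0 0)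
      have hLP : LEq ι (b (P-1)) := by
        have h1 : LEq ι (a P) := by
          have hp := h.pa 0
          rw [Nat.zero_add] at hp
          rw [hp]; exact hL
        have h2 : a P = a ((P-1)+1) := by
          congr 1; have := h.hP; omega
        rw [h2] at h1
        exact LEq.trans h1 (h.leq_aSucc_b (P-1))
      refine h.swap.E1 hnoLZ hnoRZ (P-1) ι hi hR hLP ?_
      intro ⟨h1, h2⟩; exact hs ⟨h1.symm, h2.symm⟩
    · obtain ⟨ι, hi, _, hR, hL⟩ := prodIota
        (Jle_trans (h.jle_b_a 0 0) hJ) (h.jle_a_b 0 0)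
      have hL1 : LEq ι (a 1) := LEq.trans hL (h.leq_aSucc_b 0).symm
      exact h.E1 hnoLZ hnoRZ 1 ι hi hR hL1 hs
    · obtain ⟨ι, hi, _, hR, hL⟩ := prodIota
        (Jle_trans (h.jle_b_a 0 0) hJ) (Jle_refl (b 0))
      refine h.swap.E1 hnoLZ hnoRZ 0 ι hi hR hL ?_
      intro ⟨h1, h2⟩; exact hs ⟨h1.symm, h2.symm⟩

end Cyc
end Dispatch
section Glue
variable {M : Type*} [Monoid M] [Finite M]

lemma malcev_mrun (x y : M) (w : ℕ → Option M) :
    ∀ n, malcev x y w n = mrun x y (fun k => (w k).getD 1) n := by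
  intro n; induction n with
  | zero => rfl
  | succ n ih =>
    show (mulW (malcev x y w n).1 (w n) (malcev x y w n).2,
          mulW (malcev x y w n).2 (w n) (malcev x y w n).1) = _
    rw [ih]
    have : ∀ u v : M, mulW u (w n) v = u * (w n).getD 1 * v := by
      intro u v; cases hwn : w n with
      | none => simp [mulW]
      | some cc => simp [mulW]
    rw [this, this]
    rfl

lemma malcev_some (x y : M) (w : ℕ → M) (n : ℕ) :
    malcev x y (fun k => some (w k)) n = mrun x y w n := by
  rw [malcev_mrun]; rfl

lemma mrun_eq_propagate (x y : M) (w : ℕ → M) :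
    ∀ i j, i ≤ j → (mrun x y w i).1 = (mrun x y w i).2 →
      (mrun x y w j).1 = (mrun x y w j).2 := by
  intro i j hij h
  induction j, hij using Nat.le_induction with
  | base => exact h
  | succ j hij ih =>
    show (mrun x y w j).1 * w j * (mrun x y w j).2
      = (mrun x y w j).2 * w j * (mrun x y w j).1
    rw [ih]

lemma periodize (x y : M) (W : ℕ → M) (t m : ℕ) (htm : t < m)
    (hrep : mrun x y W t = mrun x y W m) :
    ∃ W' : ℕ → M, (∀ k, k ≤ m → mrun x y W' k = mrun x y W k) ∧
      (∀ k, t ≤ k → W' (k + (m - t)) = W' k) ∧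
      (∀ k, t ≤ k → mrun x y W' (k + (m - t)) = mrun x y W' k) := by
  set W' : ℕ → M := fun k => if k < t then W k else W (t + (k - t) % (m - t)) with hW'
  have hagree : ∀ k, k < m → W' k = W k := by
    intro k hk
    rw [hW']
    by_cases h1 : k < t
    · simp [h1]
    · have h2 : (k - t) % (m - t) = k - t := Nat.mod_eq_of_lt (by omega)
      simp only [h1, if_false]
      rw [h2, show t + (k - t) = k by omega]
  have hrunagree : ∀ k, k ≤ m → mrun x y W' k = mrun x y W k := by
    intro k hk
    induction k with
    | zero => rfl
    | succ k ih =>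
      show ((mrun x y W' k).1 * W' k * (mrun x y W' k).2,
            (mrun x y W' k).2 * W' k * (mrun x y W' k).1) = _
      rw [ih (by omega), hagree k (by omega)]
      rfl
  have hWper : ∀ k, t ≤ k → W' (k + (m - t)) = W' k := by
    intro k hk
    rw [hW']
    have h1 : ¬ (k + (m - t) < t) := by omega
    have h2 : ¬ (k < t) := by omega
    simp only [h1, h2, if_false]
    rw [show k + (m - t) - t = (k - t) + (m - t) by omega, Nat.add_mod_right]
  refine ⟨W', hrunagree, hWper, ?_⟩
  intro k hk
  induction k, hk using Nat.le_induction with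
  | base =>
    rw [show t + (m - t) = m by omega, hrunagree m le_rfl, hrunagree t (by omega),
      hrep]
  | succ k hk ih =>
    have hidx : k + 1 + (m - t) = (k + (m - t)) + 1 := by omega
    rw [hidx]
    show ((mrun x y W' (k + (m-t))).1 * W' (k + (m-t)) * (mrun x y W' (k + (m-t))).2,
          (mrun x y W' (k + (m-t))).2 * W' (k + (m-t)) * (mrun x y W' (k + (m-t))).1) = _
    rw [ih, hWper k hk]
    rfl

lemma notMN_cycle (hn : ¬ IsMN M) :
    ∃ (a b c : ℕ → M) (P : ℕ), Cyc a b c P := by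
  classical
  letI : Fintype M := Fintype.ofFinite M
  set N := Fintype.card (M × M) with hN
  have hex : ∃ x y : M, ∃ w : ℕ → Option M,
      (malcev x y w (N+1)).1 ≠ (malcev x y w (N+1)).2 := by
    by_contra hc
    push_neg at hc
    exact hn ⟨N+1, by omega, fun x _ y _ w _ => hc x y w⟩
  obtain ⟨x, y, w, hne⟩ := hex
  set W : ℕ → M := fun k => (w k).getD 1 with hW
  rw [malcev_mrun] at hne
  have hneall : ∀ k, k ≤ N+1 → (mrun x y W k).1 ≠ (mrun x y W k).2 := by
    intro k hk heq
    exact hne (mrun_eq_propagate x y W k (N+1) hk heq)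
  -- pigeonhole on indices 1..N+1
  obtain ⟨i, j, hij, hfeq⟩ := Fintype.exists_ne_map_eq_of_card_lt
    (fun i : Fin (N+1) => mrun x y W (i.1+1)) (by simp [hN])
  -- wlog i < j
  have hmain : ∀ (i j : Fin (N+1)), i.1 < j.1 →
      mrun x y W (i.1+1) = mrun x y W (j.1+1) →
      ∃ (a b c : ℕ → M) (P : ℕ), Cyc a b c P := by
    clear hij hfeq i j
    intro i j hlt hfeq
    set t := i.1 + 1 with ht
    set m := j.1 + 1 with hm
    have htm : t < m := by omega
    have hmn : m ≤ N + 1 := by omega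
    obtain ⟨W', hagree, hWper, hrunper⟩ := periodize x y W t m htm hfeq
    set P := m - t with hP
    have hrunper_mul : ∀ u k, t ≤ k → mrun x y W' (k + u * P) = mrun x y W' k := by
      intro u
      induction u with
      | zero => simp
      | succ u ih =>
        intro k hk
        rw [show k + (u+1) * P = (k + u * P) + P by ring]
        rw [hrunper _ (by omega), ih k hk]
    refine ⟨fun s => (mrun x y W' (t + s)).1, fun s => (mrun x y W' (t + s)).2,
      fun s => W' (t + s), P, ?_⟩
    constructor
    · omega
    · intro s; rfl
    · intro s; rfl
    · intro s
      rw [show t + (s + P) = (t + s) + P by omega, hrunper _ (by omega)]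
    · intro s
      rw [show t + (s + P) = (t + s) + P by omega, hrunper _ (by omega)]
    · intro s
      rw [show t + (s + P) = (t + s) + P by omega, hWper _ (by omega)]
    · intro s
      have hs : t + s = (t + s % P) + (s / P) * P := by
        have h0 : s % P + (s / P) * P = s := by
          rw [mul_comm]; exact Nat.mod_add_div s P
        omega
      rw [hs, hrunper_mul _ _ (by omega)]
      have hle : t + s % P ≤ m := by
        have : s % P < P := Nat.mod_lt _ (by omega)
        omega
      rw [hagree _ hle]
      exact hneall _ (by omega)
  rcases Nat.lt_trichotomy i.1 j.1 with hlt | heq | hgt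
  · exact hmain i j hlt hfeq
  · exact absurd (Fin.ext heq) hij
  · exact hmain j i hgt hfeq.symm

end Glue
section Glue2
variable {M : Type*} [Monoid M] [Finite M]

lemma comm_closure_pair (x : M) : ∀ u ∈ Subsemigroup.closure ({x, 1} : Set M),
    ∀ v ∈ Subsemigroup.closure ({x, 1} : Set M), u * v = v * u := by
  intro u hu v hv
  induction hu, hv using Subsemigroup.closure_induction₂ with
  | mem u v hu hv =>
    rcases hu with rfl | hu
    · rcases hv with rfl | hv
      · rfl
      · rcases hv with rfl; simp
    · rcases hu with rfl
      rcases hv with rfl | hv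
      · simp
      · rcases hv with rfl; simp
  | mul_left u₁ u₂ v hu₁ hu₂ hv h₁ h₂ =>
    rw [mul_assoc, h₂, ← mul_assoc, h₁, mul_assoc]
  | mul_right u v₁ v₂ hu hv₁ hv₂ h₁ h₂ =>
    rw [← mul_assoc, h₁, mul_assoc, h₂, ← mul_assoc]

lemma run_to_notPN (x : M) (w : ℕ → M)
    (hrun : ∀ k, 1 ≤ k → (mrun x 1 w k).1 ≠ (mrun x 1 w k).2) : ¬ IsPN M := by
  classical
  letI : Fintype M := Fintype.ofFinite M
  intro hPN
  obtain ⟨i, j, hij, hfeq⟩ := Fintype.exists_ne_map_eq_of_card_lt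
    (fun i : Fin (Fintype.card (M × M) + 1) => mrun x 1 w (i.1+1)) (by simp)
  have hmain : ∀ (i j : Fin (Fintype.card (M × M) + 1)), i.1 < j.1 →
      mrun x 1 w (i.1+1) = mrun x 1 w (j.1+1) → False := by
    clear hij hfeq i j
    intro i j hlt hfeq
    set t := i.1 + 1 with ht
    set m := j.1 + 1 with hm
    have hbr : ∀ k, malcev x 1 (fun k => some (w k)) k = mrun x 1 w k :=
      malcev_some x 1 w
    have h1 := hPN x 1 (fun k => some (w k)) m ∅
      ⟨Set.empty_subset _, fun s hs => absurd hs (Set.notMem_empty s)⟩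
      (Set.notMem_empty _) (Set.notMem_empty _)
      ⟨t, by omega, by rw [hbr t]; exact hrun t (by omega), by
        rw [hbr t, hbr m]; exact hfeq⟩ 0 (by omega)
    apply h1
    refine ⟨1, one_pos, ?_⟩
    intro x' hx' y' hy' w' hw'
    left
    show mulW x' (w' 0) y' = mulW y' (w' 0) x'
    have hx'' : x' ∈ Subsemigroup.closure ({x, 1} : Set M) := hx'
    have hy'' : y' ∈ Subsemigroup.closure ({x, 1} : Set M) := hy'
    cases hwo : w' 0 with
    | none =>
      show x' * y' = y' * x'
      exact comm_closure_pair x x' hx'' y' hy''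
    | some cc =>
      have hcc : cc ∈ Subsemigroup.closure ({x, 1} : Set M) := hw' 0 cc hwo
      show x' * cc * y' = y' * cc * x'
      have h1 := comm_closure_pair x x' hx'' cc hcc
      have h2 := comm_closure_pair x x' hx'' y' hy''
      have h3 := comm_closure_pair x cc hcc y' hy''
      rw [mul_assoc, h3, ← mul_assoc, h2, mul_assoc, h1, ← mul_assoc]
  rcases Nat.lt_trichotomy i.1 j.1 with hlt | heq | hgt
  · exact hmain i j hlt hfeq
  · exact hij (Fin.ext heq)
  · exact hmain j i hgt hfeq.symm

lemma dead_to_notPN {a b c : ℕ → M} {P : ℕ} (h : Cyc a b c P)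
    (d1 : ¬ Jle (a 0) (a 0 * a 0)) (d2 : ¬ Jle (a 0) (a 0 * b 0))
    (d3 : ¬ Jle (a 0) (b 0 * a 0)) (d4 : ¬ Jle (a 0) (b 0 * b 0)) : ¬ IsPN M := by
  intro hPN
  set W : ℕ → Option M := fun k => some (c k) with hWdef
  have hbr : ∀ k, malcev (a 0) (b 0) W k = (a k, b k) := by
    intro k; induction k with
    | zero => rfl
    | succ k ih =>
      show (mulW (malcev (a 0) (b 0) W k).1 (W k) (malcev (a 0) (b 0) W k).2,
            mulW (malcev (a 0) (b 0) W k).2 (W k) (malcev (a 0) (b 0) W k).1) = _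
      rw [ih]
      show (a k * c k * b k, b k * c k * a k) = _
      rw [← h.ha, ← h.hb]
  set TT := Subsemigroup.closure (genSet (a 0) (b 0) W P) with hTT
  set I : Set M := {s | s ∈ TT ∧ ¬ Jle (a 0) s} with hI
  have ha0 : a P = a 0 := by have := h.pa 0; rwa [Nat.zero_add] at this
  have hb0 : b P = b 0 := by have := h.pb 0; rwa [Nat.zero_add] at this
  have hIdeal : IsIdealIn (TT : Set M) I := by
    constructor
    · intro s hs; exact hs.1
    · intro s hs tt htt
      constructor
      · refine ⟨Subsemigroup.mul_mem _ htt hs.1, fun hJ => hs.2 ?_⟩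
        exact Jle_trans hJ ⟨tt, 1, by simp⟩
      · refine ⟨Subsemigroup.mul_mem _ hs.1 htt, fun hJ => hs.2 ?_⟩
        exact Jle_trans hJ ⟨1, tt, by simp⟩
  have hgen : ({a 0, b 0} : Set M) ⊆ genSet (a 0) (b 0) W P := by
    intro s hs
    exact Set.mem_union_left _ hs
  have hsub : Subsemigroup.closure ({a 0, b 0} : Set M) ≤ TT :=
    Subsemigroup.closure_le.2 (fun s hs => Subsemigroup.subset_closure (hgen hs))
  -- classification of A's elements
  have hclass : ∀ s ∈ Subsemigroup.closure ({a 0, b 0} : Set M),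
      s = a 0 ∨ s = b 0 ∨ s ∈ I := by
    intro s hs
    induction hs using Subsemigroup.closure_induction with
    | mem s hsm =>
      rcases hsm with rfl | hsm
      · exact Or.inl rfl
      · rcases hsm with rfl; exact Or.inr (Or.inl rfl)
    | mul u v hu hv pu pv =>
      right; right
      have huT : u ∈ TT := hsub hu
      have hvT : v ∈ TT := hsub hv
      rcases pu with rfl | rfl | puI
      · rcases pv with rfl | rfl | pvI
        · exact ⟨Subsemigroup.mul_mem _ huT hvT, d1⟩
        · exact ⟨Subsemigroup.mul_mem _ huT hvT, d2⟩
        · exact (hIdeal.2 v pvI _ huT).1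
      · rcases pv with rfl | rfl | pvI
        · exact ⟨Subsemigroup.mul_mem _ huT hvT, d3⟩
        · exact ⟨Subsemigroup.mul_mem _ huT hvT, d4⟩
        · exact (hIdeal.2 v pvI _ huT).1
      · exact (hIdeal.2 u puI v hvT).2
  have hprodI : ∀ u v : M, u ∈ Subsemigroup.closure ({a 0, b 0} : Set M) →
      v ∈ Subsemigroup.closure ({a 0, b 0} : Set M) → u * v ∈ I := by
    intro u v hu hv
    rcases hclass _ hu with rfl | rfl | huI
    · rcases hclass _ hv with rfl | rfl | hvI
      · exact ⟨Subsemigroup.mul_mem _ (hsub hu) (hsub hv), d1⟩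
      · exact ⟨Subsemigroup.mul_mem _ (hsub hu) (hsub hv), d2⟩
      · exact (hIdeal.2 v hvI _ (hsub hu)).1
    · rcases hclass _ hv with rfl | rfl | hvI
      · exact ⟨Subsemigroup.mul_mem _ (hsub hu) (hsub hv), d3⟩
      · exact ⟨Subsemigroup.mul_mem _ (hsub hu) (hsub hv), d4⟩
      · exact (hIdeal.2 v hvI _ (hsub hu)).1
    · exact (hIdeal.2 u huI v (hsub hv)).2
  have hmod : SetMNMod I
      ((Subsemigroup.closure ({(malcev (a 0) (b 0) W 0).1,
        (malcev (a 0) (b 0) W 0).2} : Set M)) : Set M) := by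
    refine ⟨1, one_pos, ?_⟩
    intro x' hx' y' hy' w' hw'
    right
    have hx'' : x' ∈ Subsemigroup.closure ({a 0, b 0} : Set M) := hx'
    have hy'' : y' ∈ Subsemigroup.closure ({a 0, b 0} : Set M) := hy'
    have key : ∀ o : Option M, (∀ cc, o = some cc → cc ∈
        Subsemigroup.closure ({a 0, b 0} : Set M)) →
        ∀ u v : M, u ∈ Subsemigroup.closure ({a 0, b 0} : Set M) →
        v ∈ Subsemigroup.closure ({a 0, b 0} : Set M) → mulW u o v ∈ I := by
      intro o ho u v hu hv
      cases o with
      | none => exact hprodI u v hu hv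
      | some cc =>
        have hcc := ho cc rfl
        show u * cc * v ∈ I
        exact (hIdeal.2 (u * cc) (hprodI u cc hu hcc) v (hsub hv)).2
    exact ⟨key (w' 0) (fun cc hcc => hw' 0 cc hcc) x' y' hx'' hy'',
           key (w' 0) (fun cc hcc => hw' 0 cc hcc) y' x' hy'' hx''⟩
  refine (hPN (a 0) (b 0) W P I hIdeal ?_ ?_ ?_ 0 (Nat.zero_le P)) hmod
  · rw [hbr P]
    intro hmem
    exact hmem.2 (by rw [show (a P, b P).1 = a P from rfl, ha0]; exact Jle_refl _)
  · rw [hbr P]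
    intro hmem
    exact hmem.2 (by rw [show (a P, b P).2 = b P from rfl, hb0]; exact h.jle_a_b 0 0)
  · refine ⟨0, h.hP, ?_, ?_⟩
    · rw [hbr 0]
      exact fun heq => h.hne 0 heq
    · rw [hbr 0, hbr P, ha0, hb0]

lemma MN_to_PN (hMN : IsMN M) : IsPN M := by
  obtain ⟨n, hn, hall⟩ := hMN
  intro x y w m I hIdeal hl1 hl2 hcyc
  exfalso
  obtain ⟨t, htm, hneq, heq⟩ := hcyc
  set W : ℕ → M := fun k => (w k).getD 1 with hW
  have hb := malcev_mrun x y w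
  rw [hb t, hb m] at heq
  rw [hb t] at hneq
  obtain ⟨W', hagree, hWper, hrunper⟩ := periodize x y W t m htm heq
  have hrunper_mul : ∀ u k, t ≤ k →
      mrun x y W' (k + u * (m - t)) = mrun x y W' k := by
    intro u
    induction u with
    | zero => simp
    | succ u ih =>
      intro k hk
      rw [show k + (u+1) * (m-t) = (k + u * (m-t)) + (m-t) by ring]
      rw [hrunper _ (by omega), ih k hk]
  have hMNeq := hall x (Set.mem_univ x) y (Set.mem_univ y)
    (fun k => some (W' k)) (fun _ _ _ => Set.mem_univ _)
  rw [malcev_some] at hMNeq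
  have hnle : n ≤ t + n * (m - t) := by
    have h1 : n * 1 ≤ n * (m - t) := Nat.mul_le_mul_left n (by omega)
    omega
  have h2 := mrun_eq_propagate x y W' n (t + n * (m - t)) hnle hMNeq
  rw [show t + n * (m-t) = t + n * (m-t) from rfl] at h2
  have h3 : mrun x y W' (t + n * (m - t)) = mrun x y W' t := hrunper_mul n t le_rfl
  rw [h3, hagree t (by omega)] at h2
  exact hneq h2

end Glue2

/-- A finite monoid is pseudo-nilpotent iff it is Mal'cev nilpotent. -/
theorem stmt4 {M : Type*} [Monoid M] [Finite M] :
    IsPN M ↔ IsMN M := by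
  constructor
  · intro hPN
    by_contra hnMN
    obtain ⟨a, b, c, P, hC⟩ := notMN_cycle hnMN
    by_cases hLZ : ∃ u v : M, idem u ∧ idem v ∧ u * v = u ∧ v * u = v ∧ u ≠ v
    · obtain ⟨u, v, h1, h2, h3, h4, h5⟩ := hLZ
      obtain ⟨x, w, hrun⟩ := runLZ h1 h2 h3 h4 h5
      exact run_to_notPN x w hrun hPN
    · by_cases hRZ : ∃ u v : M, idem u ∧ idem v ∧ u * v = v ∧ v * u = u ∧ u ≠ v
      · obtain ⟨u, v, h1, h2, h3, h4, h5⟩ := hRZ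
        obtain ⟨x, w, hrun⟩ := runRZ h1 h2 h3 h4 h5
        exact run_to_notPN x w hrun hPN
      · push_neg at hLZ hRZ
        have hnoLZ : ∀ u v : M, idem u → idem v → u * v = u → v * u = v → u = v :=
          fun u v p1 p2 p3 p4 => hLZ u v p1 p2 p3 p4
        have hnoRZ : ∀ u v : M, idem u → idem v → u * v = v → v * u = u → u = v :=
          fun u v p1 p2 p3 p4 => hRZ u v p1 p2 p3 p4
        by_cases halive : Jle (a 0) (a 0 * a 0) ∨ Jle (a 0) (a 0 * b 0) ∨
            Jle (a 0) (b 0 * a 0) ∨ Jle (a 0) (b 0 * b 0)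
        · obtain ⟨x, w, hrun⟩ := hC.cycle_to_run hnoLZ hnoRZ halive
          exact run_to_notPN x w hrun hPN
        · push_neg at halive
          exact dead_to_notPN hC halive.1 halive.2.1 halive.2.2.1 halive.2.2.2 hPN
  · exact MN_to_PN
end

section
/- Let S be a pseudo-nilpotent finite semigroup and I an ideal of S whose upper non-nilpotent graph N_I is empty. Then every element of I is an isolated vertex in the upper non-nilpotent graph N_S, i.e., for every b ∈ I and every a ∈ S with a ≠ b, the subsemigroup ⟨a, b⟩ is Mal'cev nilpotent. -/
section Aux
variable {S : Type*} [Semigroup S]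

lemma malcev_succ (x y : S) (w : ℕ → Option S) (n : ℕ) :
    malcev x y w (n + 1) =
      (mulW (malcev x y w n).1 (w n) (malcev x y w n).2,
       mulW (malcev x y w n).2 (w n) (malcev x y w n).1) := rfl

lemma malcev_eq_propagate (x y : S) (w : ℕ → Option S) {k : ℕ}
    (h : (malcev x y w k).1 = (malcev x y w k).2) :
    ∀ j, k ≤ j → (malcev x y w j).1 = (malcev x y w j).2 := by
  intro j hj
  induction j, hj using Nat.le_induction with
  | base => exact h
  | succ n hn ih => rw [malcev_succ, ih]

lemma mulW_left_mem {I : Set S} (hI : ∀ u ∈ I, ∀ t : S, t * u ∈ I ∧ u * t ∈ I)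
    {u : S} (hu : u ∈ I) (w : Option S) (v : S) : mulW u w v ∈ I := by
  cases w with
  | none => exact (hI u hu v).2
  | some c => exact (hI _ (hI u hu c).2 v).2

lemma mulW_right_mem {I : Set S} (hI : ∀ u ∈ I, ∀ t : S, t * u ∈ I ∧ u * t ∈ I)
    {v : S} (hv : v ∈ I) (w : Option S) (u : S) : mulW u w v ∈ I := by
  cases w with
  | none => exact (hI v hv u).1
  | some c => exact (hI v hv (u * c)).1

lemma mulW_some_mem {I : Set S} (hI : ∀ u ∈ I, ∀ t : S, t * u ∈ I ∧ u * t ∈ I)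
    {c : S} (hc : c ∈ I) (u v : S) : mulW u (some c) v ∈ I :=
  (hI _ (hI c hc u).1 v).2

lemma malcev_mem_propagate {I : Set S} (hI : ∀ u ∈ I, ∀ t : S, t * u ∈ I ∧ u * t ∈ I)
    (x y : S) (w : ℕ → Option S) {k : ℕ}
    (h : (malcev x y w k).1 ∈ I ∧ (malcev x y w k).2 ∈ I) :
    ∀ j, k ≤ j → (malcev x y w j).1 ∈ I ∧ (malcev x y w j).2 ∈ I := by
  intro j hj
  induction j, hj using Nat.le_induction with
  | base => exact h
  | succ n hn ih =>
    rw [malcev_succ]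
    exact ⟨mulW_left_mem hI ih.1 _ _, mulW_right_mem hI ih.1 _ _⟩

lemma closure_singleton_comm (a : S) :
    ∀ u ∈ Subsemigroup.closure ({a} : Set S), ∀ v ∈ Subsemigroup.closure ({a} : Set S),
      u * v = v * u := by
  have h1 : ∀ u ∈ Subsemigroup.closure ({a} : Set S), u * a = a * u := by
    intro u hu
    induction hu using Subsemigroup.closure_induction with
    | mem z hz => rw [Set.mem_singleton_iff.mp hz]
    | mul z y hz hy ihz ihy => rw [mul_assoc, ihy, ← mul_assoc, ihz, mul_assoc]
  intro u hu v hv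
  induction hv using Subsemigroup.closure_induction with
  | mem z hz => rw [Set.mem_singleton_iff.mp hz]; exact h1 u hu
  | mul z y hz hy ihz ihy => rw [← mul_assoc, ihz, mul_assoc, ihy, ← mul_assoc]

lemma mem_closure_pair {I : Set S} (hI : ∀ u ∈ I, ∀ t : S, t * u ∈ I ∧ u * t ∈ I)
    {a b : S} (hb : b ∈ I) :
    ∀ s ∈ Subsemigroup.closure ({a, b} : Set S),
      s ∈ Subsemigroup.closure ({a} : Set S) ∨ s ∈ I := by
  intro s hs
  induction hs using Subsemigroup.closure_induction with
  | mem z hz =>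
    rcases hz with rfl | rfl
    · exact Or.inl (Subsemigroup.subset_closure (Set.mem_singleton _))
    · exact Or.inr hb
  | mul z y hz hy ihz ihy =>
    rcases ihz with hz' | hz'
    · rcases ihy with hy' | hy'
      · exact Or.inl (mul_mem hz' hy')
      · exact Or.inr (hI y hy' z).1
    · exact Or.inr (hI z hz' y).2

end Aux

/-- If `S` is pseudo-nilpotent and finite and `I` is an ideal of `S` whose upper
non-nilpotent graph is empty, then every element of `I` is an isolated vertex of
`N_S`: for every `b ∈ I` and `a ≠ b`, the subsemigroup `⟨a, b⟩` is Mal'cev nilpotent. -/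
theorem stmt5 {S : Type*} [Semigroup S] [Finite S] (hPN : IsPN S) (I : Set S)
    (hI : IsIdealIn Set.univ I) (hEmpty : ∀ a ∈ I, ∀ b ∈ I, ¬ NEdge a b) :
    ∀ b ∈ I, ∀ a : S, a ≠ b →
      SetMN (Subsemigroup.closure ({a, b} : Set S) : Set S) := by
  intro b hb a hab
  by_contra hA
  have hI2 : ∀ u ∈ I, ∀ t : S, t * u ∈ I ∧ u * t ∈ I :=
    fun u hu t => hI.2 u hu t trivial
  letI := Fintype.ofFinite S
  set A : Set S := (Subsemigroup.closure ({a, b} : Set S) : Set S) with hAdef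
  set n : ℕ := Fintype.card (S × S) with hndef
  have hn0 : 0 < n := Fintype.card_pos_iff.mpr ⟨(a, b)⟩
  -- extract a witness of non-nilpotency at level n
  have hex : ∃ x ∈ A, ∃ y ∈ A, ∃ w : ℕ → Option S,
      (∀ k c, w k = some c → c ∈ A) ∧ (malcev x y w n).1 ≠ (malcev x y w n).2 := by
    by_contra h
    push_neg at h
    exact hA ⟨n, hn0, h⟩
  obtain ⟨x, hx, y, hy, w, hw, hne⟩ := hex
  -- pigeonhole: find a cycle
  obtain ⟨k, l, hkl, hfeq⟩ := Fintype.exists_ne_map_eq_of_card_lt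
    (fun i : Fin (n + 1) => malcev x y w i)
    (by rw [Fintype.card_fin]; exact Nat.lt_succ_self n)
  obtain ⟨t, m, htm, hmn, hcyc⟩ :
      ∃ t m : ℕ, t < m ∧ m ≤ n ∧ malcev x y w t = malcev x y w m := by
    rcases hkl.lt_or_gt with h | h
    · exact ⟨k, l, h, Nat.lt_succ_iff.mp l.isLt, hfeq⟩
    · exact ⟨l, k, h, Nat.lt_succ_iff.mp k.isLt, hfeq.symm⟩
  have hm1 : 1 ≤ m := Nat.lt_of_le_of_lt (Nat.zero_le t) htm
  have hnej : ∀ j ≤ n, (malcev x y w j).1 ≠ (malcev x y w j).2 := by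
    intro j hj he
    exact hne (malcev_eq_propagate x y w he n hj)
  have hne_t : (malcev x y w t).1 ≠ (malcev x y w t).2 :=
    hnej t (le_trans (le_of_lt htm) hmn)
  have hne_m : (malcev x y w m).1 ≠ (malcev x y w m).2 := hnej m hmn
  -- pseudo-nilpotency with the empty ideal
  have hEmptyIdeal : IsIdealIn
      (Subsemigroup.closure (genSet x y w m) : Set S) (∅ : Set S) :=
    ⟨Set.empty_subset _, fun u hu => absurd hu (Set.notMem_empty u)⟩
  have hnotMN := hPN x y w m ∅ hEmptyIdeal (Set.notMem_empty _) (Set.notMem_empty _)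
    ⟨t, htm, hne_t, hcyc⟩ m le_rfl
  -- show both λ_m and ρ_m lie in I
  have hmem : (malcev x y w m).1 ∈ I ∧ (malcev x y w m).2 ∈ I := by
    by_cases hcase : x ∈ I ∨ y ∈ I ∨ ∃ k, k < m ∧ ∃ c, w k = some c ∧ c ∈ I
    · rcases hcase with hxI | hyI | ⟨j, hj, c, hwj, hcI⟩
      · refine malcev_mem_propagate hI2 x y w ?_ m hm1
        rw [malcev_succ]
        exact ⟨mulW_left_mem hI2 hxI _ _, mulW_right_mem hI2 hxI _ _⟩
      · refine malcev_mem_propagate hI2 x y w ?_ m hm1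
        rw [malcev_succ]
        exact ⟨mulW_right_mem hI2 hyI _ _, mulW_left_mem hI2 hyI _ _⟩
      · refine malcev_mem_propagate hI2 x y w ?_ m hj
        rw [malcev_succ, hwj]
        exact ⟨mulW_some_mem hI2 hcI _ _, mulW_some_mem hI2 hcI _ _⟩
    · exfalso
      push_neg at hcase
      obtain ⟨hxI, hyI, hwI⟩ := hcase
      have hxa : x ∈ Subsemigroup.closure ({a} : Set S) :=
        (mem_closure_pair hI2 hb x hx).resolve_right hxI
      have hya : y ∈ Subsemigroup.closure ({a} : Set S) :=
        (mem_closure_pair hI2 hb y hy).resolve_right hyI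
      have h1 : (malcev x y w 1).1 = (malcev x y w 1).2 := by
        rw [malcev_succ]
        show mulW x (w 0) y = mulW y (w 0) x
        cases hw0 : w 0 with
        | none => exact closure_singleton_comm a x hxa y hya
        | some c =>
          have hcA : c ∈ A := hw 0 c hw0
          have hca : c ∈ Subsemigroup.closure ({a} : Set S) :=
            (mem_closure_pair hI2 hb c hcA).resolve_right (hwI 0 hm1 c hw0)
          show x * c * y = y * c * x
          rw [closure_singleton_comm a (x * c) (mul_mem hxa hca) y hya,
            mul_assoc, closure_singleton_comm a x hxa c hca, ← mul_assoc]
      exact hne_m (malcev_eq_propagate x y w h1 m hm1)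
  -- there is no edge inside I, so ⟨λ_m, ρ_m⟩ is nilpotent; contradiction
  have hMN : SetMN (Subsemigroup.closure
      ({(malcev x y w m).1, (malcev x y w m).2} : Set S) : Set S) := by
    by_contra h
    exact hEmpty _ hmem.1 _ hmem.2 ⟨hne_m, h⟩
  obtain ⟨N, hN, hmain⟩ := hMN
  exact hnotMN ⟨N, hN, fun x' hx' y' hy' w' hw' =>
    Or.inl (hmain x' hx' y' hy' w' hw')⟩
end

section
/- A completely simple finite semigroup S has a complete upper non-nilpotent graph (every two distinct elements generate a non-nilpotent subsemigroup) if and only if S is a completely simple semigroup that is a band, i.e., isomorphic to a rectangular band M({e}, I, Λ; P) over the trivial group; in particular, in such a semigroup a = λ_2(a, b, 1, 1) and b = ρ_2(a, b, 1, 1) for all a, b. -/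
/-- A completely simple semigroup: it is simple (the only nonempty ideal is `S`)
and it possesses a primitive idempotent. -/
def IsCompletelySimple (S : Type*) [Semigroup S] : Prop :=
  (∀ I : Set S, I.Nonempty → IsIdealIn Set.univ I → I = Set.univ) ∧
  ∃ e : S, e * e = e ∧ ∀ f : S, f * f = f → e * f = f → f * e = f → f = e


/-- A commutative mul-closed subset is Mal'cev nilpotent with `n = 1`. -/
lemma comm_setMN {S : Type*} [Semigroup S] (T : Subsemigroup S)
    (h : ∀ x ∈ T, ∀ y ∈ T, x * y = y * x) : SetMN (T : Set S) := by
  refine ⟨1, Nat.one_pos, ?_⟩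
  intro x hx y hy w hw
  show mulW x (w 0) y = mulW y (w 0) x
  cases hw0 : w 0 with
  | none => exact h x hx y hy
  | some c =>
    have hc : c ∈ T := hw 0 c hw0
    show x * c * y = y * c * x
    calc x * c * y = y * (x * c) := h _ (mul_mem hx hc) y hy
      _ = y * (c * x) := by rw [h x hx c hc]
      _ = y * c * x := (mul_assoc _ _ _).symm

lemma closure_comm {S : Type*} [Semigroup S] {s : Set S}
    (h : ∀ x ∈ s, ∀ y ∈ s, x * y = y * x) :
    ∀ x ∈ Subsemigroup.closure s, ∀ y ∈ Subsemigroup.closure s, x * y = y * x := by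
  intro x hx y hy
  induction hx, hy using Subsemigroup.closure_induction₂ with
  | mem u v hu hv => exact h u hu v hv
  | mul_left u v z hu hv hz h1 h2 => rw [mul_assoc, h2, ← mul_assoc, h1, mul_assoc]
  | mul_right u v z hz hu hv h1 h2 => rw [← mul_assoc, h1, mul_assoc, h2, ← mul_assoc]

/-- A finite completely simple semigroup has a complete upper non-nilpotent graph
iff it is a rectangular band (i.e. a completely simple semigroup `M({e}, I, Λ; P)`
over the trivial group, which is exactly a band satisfying `a b a = a`); in this
case `a = λ_2(a, b, 1, 1)` and `b = ρ_2(a, b, 1, 1)` for all `a, b`. -/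
theorem stmt7 {S : Type*} [Semigroup S] [Finite S] (hCS : IsCompletelySimple S) :
    ((∀ a b : S, a ≠ b → ¬ SetMN (Subsemigroup.closure ({a, b} : Set S) : Set S)) ↔
      ((∀ a : S, a * a = a) ∧ ∀ a b : S, a * b * a = a)) ∧
    (((∀ a : S, a * a = a) ∧ ∀ a b : S, a * b * a = a) →
      ∀ a b : S, malcev a b (fun _ => none) 2 = (a, b)) := by
  have main : (∀ a : S, a * a = a) ∧ (∀ a b : S, a * b * a = a) →
      ∀ a b : S, malcev a b (fun _ => none) 2 = (a, b) := by
    rintro ⟨hb, hr⟩ a b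
    have h1 : a * b * (b * a) = a := by
      rw [mul_assoc a b, ← mul_assoc b b, hb b, ← mul_assoc, hr]
    have h2 : b * a * (a * b) = b := by
      rw [mul_assoc b a, ← mul_assoc a a, hb a, ← mul_assoc, hr]
    show (mulW (a * b) none (b * a), mulW (b * a) none (a * b)) = (a, b)
    simp [mulW, h1, h2]
  refine ⟨⟨?_, ?_⟩, main⟩
  · -- forward direction
    intro H
    have band : ∀ a : S, a * a = a := by
      intro a
      by_contra hne
      refine H a (a * a) (fun h => hne h.symm) (comm_setMN _ ?_)
      refine closure_comm ?_
      rintro x (rfl | rfl) y (rfl | rfl) <;> simp -failIfUnchanged only [Set.mem_singleton_iff] at * <;>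
        first
          | rfl
          | (subst_vars; rw [mul_assoc])
          | (subst_vars; rw [← mul_assoc])
    refine ⟨band, ?_⟩
    intro a b
    by_contra hne
    set c := a * b * a with hc
    have hac : a * c = c := by rw [hc, ← mul_assoc, ← mul_assoc, band]
    have hca : c * a = c := by rw [hc, mul_assoc, band]
    have hcc : c * c = c := by
      have : a * b * (a * b) = a * b := band (a * b)
      rw [hc]
      calc a * b * a * (a * b * a) = a * b * (a * (a * b)) * a := by
            simp only [mul_assoc]
        _ = a * b * (a * a * b) * a := by rw [mul_assoc a a b]
        _ = a * b * (a * b) * a := by rw [band a]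
        _ = a * b * a := by rw [this]
    refine H a c (fun h => hne h.symm) (comm_setMN _ ?_)
    refine closure_comm ?_
    rintro x (rfl | rfl) y (rfl | rfl) <;>
      simp -failIfUnchanged only [Set.mem_singleton_iff] at * <;> subst_vars <;>
        simp only [hac, hca, hcc]
  · -- backward direction
    rintro ⟨hb, hr⟩ a b hab ⟨n, hn, hall⟩
    have key := main ⟨hb, hr⟩ a b
    have hmem : ∀ z ∈ ({a, b} : Set S), z ∈ Subsemigroup.closure ({a, b} : Set S) :=
      fun z hz => Subsemigroup.subset_closure hz
    have hcomm : a * b ≠ b * a := by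
      intro h
      have ha : a = b * a := by
        calc a = a * b * a := (hr a b).symm
          _ = b * a * a := by rw [h]
          _ = b * (a * a) := mul_assoc _ _ _
          _ = b * a := by rw [hb a]
      have hbb : b = b * a := by
        calc b = b * a * b := (hr b a).symm
          _ = a * b * b := by rw [← h]
          _ = a * (b * b) := mul_assoc _ _ _
          _ = a * b := by rw [hb b]
          _ = b * a := h
      exact hab (ha.trans hbb.symm)
    have step : ∀ m : ℕ, malcev a b (fun _ => none) m = (a, b) ∨
        malcev a b (fun _ => none) m = (a * b, b * a) := by
      intro m
      induction m with
      | zero => exact Or.inl rfl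
      | succ k ih =>
        rcases ih with h | h
        · right
          show (mulW (malcev a b (fun _ => none) k).1 none (malcev a b (fun _ => none) k).2,
              mulW (malcev a b (fun _ => none) k).2 none (malcev a b (fun _ => none) k).1)
            = (a * b, b * a)
          rw [h]
          rfl
        · left
          have h1 : a * b * (b * a) = a := by
            rw [mul_assoc a b, ← mul_assoc b b, hb b, ← mul_assoc, hr]
          have h2 : b * a * (a * b) = b := by
            rw [mul_assoc b a, ← mul_assoc a a, hb a, ← mul_assoc, hr]
          show (mulW (malcev a b (fun _ => none) k).1 none (malcev a b (fun _ => none) k).2,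
              mulW (malcev a b (fun _ => none) k).2 none (malcev a b (fun _ => none) k).1)
            = (a, b)
          rw [h]
          show (a * b * (b * a), b * a * (a * b)) = (a, b)
          rw [h1, h2]
    have := hall a (hmem a (Set.mem_insert _ _)) b
      (hmem b (Set.mem_insert_of_mem _ rfl)) (fun _ => none)
      (fun k c h => by simp at h)
    rcases step n with h | h
    · rw [h] at this; exact hab this
    · rw [h] at this; exact hcomm this
end

section
/- Let M^0(G, I, Λ; P) be a finite completely 0-simple semigroup over a nilpotent group G in which all entries of the sandwich matrix P are non-zero. If |I| + |Λ| > 2 and (i, λ) ≠ (i', λ'), then the subsemigroup generated by (g; i, λ) and (g'; i', λ') is not Mal'cev nilpotent for all g, g' ∈ G. Consequently, the upper non-nilpotent graph of M^0(G, I, Λ; P) \ {θ} is connected and regular. -/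
/-- Carrier of the Rees matrix semigroup with zero `M⁰(G, I, Λ; P)`:
`none` is the zero `θ`, `some (g, i, λ)` is the element `(g; i, λ)`. -/
def ReesM0 (G I L : Type*) (_P : L → I → Option G) : Type _ := Option (G × I × L)

/-- Multiplication of `M⁰(G, I, Λ; P)`. -/
def rmMul {G I L : Type*} [Group G] (P : L → I → Option G) :
    Option (G × I × L) → Option (G × I × L) → Option (G × I × L)
  | some (g, i, l), some (h, j, m) => (P l j).elim none fun p => some (g * p * h, i, m)
  | _, _ => none

theorem rmMul_assoc {G I L : Type*} [Group G] (P : L → I → Option G) :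
    ∀ a b c : Option (G × I × L), rmMul P (rmMul P a b) c = rmMul P a (rmMul P b c) := by
  rintro (_ | ⟨g, i, l⟩) (_ | ⟨h, j, m⟩) (_ | ⟨k, s, t⟩) <;>
    simp only [rmMul] <;>
    try rfl
  · rcases hp : P l j with _ | p <;> simp [rmMul, hp]
  · rcases hp : P l j with _ | p <;> rcases hq : P m s with _ | q <;>
      simp [rmMul, hp, hq, mul_assoc]

instance ReesM0.semigroup {G I L : Type*} [Group G] {P : L → I → Option G} :
    Semigroup (ReesM0 G I L P) where
  mul := rmMul P
  mul_assoc := rmMul_assoc P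

/-- The nonzero element `(g; i, λ)` of `M⁰(G, I, Λ; P)`. -/
def ReesM0.elem {G I L : Type*} {P : L → I → Option G} (g : G) (i : I) (l : L) :
    ReesM0 G I L P := some (g, i, l)

/-- The zero `θ` of `M⁰(G, I, Λ; P)`. -/
def ReesM0.theta {G I L : Type*} {P : L → I → Option G} : ReesM0 G I L P := none

/-- The upper non-nilpotent graph of a semigroup. -/
def nnGraph (S : Type*) [Semigroup S] : SimpleGraph S where
  Adj a b := NEdge a b
  symm := by
    constructor
    rintro a b ⟨h1, h2⟩
    exact ⟨h1.symm, by rwa [Set.pair_comm b a]⟩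
  loopless := by constructor; rintro a ⟨h1, _⟩; exact h1 rfl


section Aux
variable {G I L : Type*} [Group G]

open scoped commutatorElement in
lemma malcev_mem_lcs (x y : G) (w : ℕ → Option G) :
    ∀ n, (malcev x y w n).1⁻¹ * (malcev x y w n).2 ∈ Subgroup.lowerCentralSeries (⊤ : Subgroup G) n := by
  intro n
  induction n with
  | zero => simp [lowerCentralSeries]
  | succ n ih =>
    rw [lowerCentralSeries_succ]
    set a := (malcev x y w n).1 with ha
    set b := (malcev x y w n).2 with hb
    have key : ∀ u : G, (a * u * b)⁻¹ * (b * u * a) = ⁅(a⁻¹ * b)⁻¹, (u * a)⁻¹⁆ := by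
      intro u; group
    have key0 : (a * b)⁻¹ * (b * a) = ⁅(a⁻¹ * b)⁻¹, a⁻¹⁆ := by group
    have hm : ∀ u : G, ⁅(a⁻¹ * b)⁻¹, u⁆ ∈ ⁅Subgroup.lowerCentralSeries (⊤ : Subgroup G) n, (⊤ : Subgroup G)⁆ :=
      fun u => Subgroup.commutator_mem_commutator (inv_mem ih) (Subgroup.mem_top u)
    show (mulW a (w n) b)⁻¹ * (mulW b (w n) a) ∈ _
    cases w n with
    | none => simp only [mulW]; rw [key0]; exact hm _
    | some c => simp only [mulW]; rw [key c]; exact hm _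

lemma group_malcev (hG : Group.IsNilpotent G) :
    ∃ n : ℕ, 0 < n ∧ ∀ (x y : G) (w : ℕ → Option G),
      (malcev x y w n).1 = (malcev x y w n).2 := by
  obtain ⟨N, hN⟩ := nilpotent_iff_lowerCentralSeries.mp hG
  refine ⟨N + 1, Nat.succ_pos _, fun x y w => ?_⟩
  have h := malcev_mem_lcs x y w (N + 1)
  have hle : Subgroup.lowerCentralSeries (⊤ : Subgroup G) (N + 1) ≤ ⊥ := hN ▸ Subgroup.lowerCentralSeries_antitone ⊤ (Nat.le_succ N)
  have := hle h
  rw [Subgroup.mem_bot] at this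
  exact inv_mul_eq_one.mp this

variable {P : L → I → Option G}

lemma rm_mul (g h : G) (i j : I) (l m : L) (p : G) (hp : P l j = some p) :
    (ReesM0.elem (P := P) g i l) * (ReesM0.elem (P := P) h j m)
      = ReesM0.elem (P := P) (g * p * h) i m := by
  show rmMul P _ _ = _
  simp [rmMul, hp, ReesM0.elem]

/-- The cell `{(h; i, l) | h ∈ G}` is a subsemigroup when `P l i ≠ θ`. -/
def cellSub (P : L → I → Option G) (i : I) (l : L) (hp : P l i ≠ none) :
    Subsemigroup (ReesM0 G I L P) where
  carrier := {s | ∃ h : G, s = ReesM0.elem (P := P) h i l}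
  mul_mem' := by
    rintro a b ⟨ga, rfl⟩ ⟨gb, rfl⟩
    obtain ⟨p, hpeq⟩ := Option.ne_none_iff_exists'.mp hp
    exact ⟨ga * p * gb, rm_mul ga gb i i l l p hpeq⟩

/-- Any subset of a cell is Mal'cev nilpotent (given `G` nilpotent). -/
lemma cell_setMN (hG : Group.IsNilpotent G) (i : I) (l : L) (p : G)
    (hp : P l i = some p) (A : Set (ReesM0 G I L P))
    (hA : ∀ s ∈ A, ∃ h : G, s = ReesM0.elem (P := P) h i l) : SetMN A := by
  obtain ⟨n, hn, hmal⟩ := group_malcev hG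
  refine ⟨n, hn, ?_⟩
  intro x hx y hy w hw
  -- maps between G and the cell
  set ψ : G → ReesM0 G I L P := fun h => ReesM0.elem (P := P) (h * p⁻¹) i l with hψ
  have ψmul : ∀ a b : G, ψ a * ψ b = ψ (a * b) := by
    intro a b
    show ReesM0.elem _ i l * ReesM0.elem _ i l = _
    rw [rm_mul _ _ i i l l p hp]
    simp [ψ, mul_assoc]
  set φ : ReesM0 G I L P → G := fun s =>
    match s with
    | none => 1
    | some (h, _, _) => h * p
    with hφ
  have ψφ : ∀ s ∈ A, ψ (φ s) = s := by
    intro s hs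
    obtain ⟨h, rfl⟩ := hA s hs
    simp [ψ, φ, ReesM0.elem, mul_assoc]
    rfl
  set w' : ℕ → Option G := fun k => Option.map φ (w k) with hw'
  have mulWlem : ∀ (a b : G) (ow : Option G),
      mulW (ψ a) (Option.map ψ ow) (ψ b) = ψ (mulW a ow b) := by
    rintro a b (_ | c)
    · simp [mulW, ψmul]
    · simp only [mulW, Option.map_some]
      rw [ψmul, ψmul]
  have wconv : ∀ k, w k = Option.map ψ (w' k) := by
    intro k
    rcases hk : w k with _ | c
    · simp [w', hk]
    · simp [w', hk, ψφ c (hw k c hk)]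
  have key : ∀ m, malcev x y w m = (ψ (malcev (φ x) (φ y) w' m).1,
      ψ (malcev (φ x) (φ y) w' m).2) := by
    intro m
    induction m with
    | zero => simp [malcev, ψφ x hx, ψφ y hy]
    | succ m ih =>
      show (mulW (malcev x y w m).1 (w m) (malcev x y w m).2,
            mulW (malcev x y w m).2 (w m) (malcev x y w m).1) = _
      rw [ih, wconv m]
      simp only [mulWlem]
      rfl
  rw [key n, hmal (φ x) (φ y) w']

lemma diff_cell_not_setMN (hP : ∀ l i, P l i ≠ none)
    {g g' : G} {i i' : I} {l l' : L} (hne : (i, l) ≠ (i', l'))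
    (A : Set (ReesM0 G I L P))
    (ha : ReesM0.elem (P := P) g i l ∈ A)
    (hb : ReesM0.elem (P := P) g' i' l' ∈ A) : ¬ SetMN A := by
  rintro ⟨n, hn, h⟩
  set f : ℕ → L := fun k => if Even k then l else l' with hf
  have hper : ∀ k, f (k + 2) = f k := by
    intro k; simp [f, Nat.even_add]
  have key : ∀ m, ∃ g1 g2 : G,
      malcev (ReesM0.elem (P := P) g i l) (ReesM0.elem (P := P) g' i' l')
        (fun _ => none) m
      = (ReesM0.elem (P := P) g1 i (f m), ReesM0.elem (P := P) g2 i' (f (m + 1))) := by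
    intro m
    induction m with
    | zero => exact ⟨g, g', by simp [malcev, f]⟩
    | succ m ih =>
      obtain ⟨g1, g2, hm⟩ := ih
      obtain ⟨p, hp1⟩ := Option.ne_none_iff_exists'.mp (hP (f m) i')
      obtain ⟨q, hq1⟩ := Option.ne_none_iff_exists'.mp (hP (f (m + 1)) i)
      refine ⟨g1 * p * g2, g2 * q * g1, ?_⟩
      show (mulW _ none _, mulW _ none _) = _
      rw [hm]
      simp only [mulW]
      rw [rm_mul _ _ i i' (f m) (f (m + 1)) p hp1,
        rm_mul _ _ i' i (f (m + 1)) (f m) q hq1, hper m]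
  obtain ⟨g1, g2, hm⟩ := key n
  have := h _ ha _ hb (fun _ => none) (by simp)
  rw [hm] at this
  simp only [ReesM0.elem] at this
  have h2 : (g1, i, f n) = (g2, i', f (n + 1)) := Option.some_injective _ this
  have hii : i = i' := (Prod.ext_iff.mp (Prod.ext_iff.mp h2).2).1
  have hll : f n = f (n + 1) := (Prod.ext_iff.mp (Prod.ext_iff.mp h2).2).2
  have hll' : l = l' := by
    by_cases he : Even n
    · simpa [f, he, Nat.even_add_one] using hll
    · simpa [f, he, Nat.even_add_one] using hll.symm
  exact hne (by rw [hii, hll'])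

lemma nedge_iff (hG : Group.IsNilpotent G) (hP : ∀ l i, P l i ≠ none)
    (ga gb : G) (ia ib : I) (la lb : L) :
    NEdge (ReesM0.elem (P := P) ga ia la) (ReesM0.elem (P := P) gb ib lb) ↔
      (ia, la) ≠ (ib, lb) := by
  constructor
  · rintro ⟨hne, hnm⟩ hcell
    obtain ⟨hi, hl⟩ : ia = ib ∧ la = lb := Prod.mk.injEq .. ▸ Prod.ext_iff.mp hcell
    subst hi; subst hl
    obtain ⟨p, hp⟩ := Option.ne_none_iff_exists'.mp (hP la ia)
    refine hnm (cell_setMN hG ia la p hp _ ?_)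
    intro s hs
    have hle : Subsemigroup.closure ({ReesM0.elem (P := P) ga ia la,
        ReesM0.elem (P := P) gb ia la} : Set (ReesM0 G I L P)) ≤ cellSub P ia la (hP la ia) := by
      rw [Subsemigroup.closure_le]
      rintro s (rfl | rfl)
      · exact ⟨ga, rfl⟩
      · exact ⟨gb, rfl⟩
    exact hle hs
  · intro hcell
    refine ⟨?_, diff_cell_not_setMN hP hcell _
      (Subsemigroup.subset_closure (Or.inl rfl))
      (Subsemigroup.subset_closure (Or.inr rfl))⟩
    intro he
    apply hcell
    have h3 : (ga, ia, la) = (gb, ib, lb) := Option.some_injective _ he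
    rw [Prod.ext_iff, Prod.ext_iff] at h3
    exact Prod.ext h3.2.1 h3.2.2

end Aux

/-- In a finite completely 0-simple semigroup `M⁰(G, I, Λ; P)` over a nilpotent
group `G` with all sandwich entries non-zero and `|I| + |Λ| > 2`, any two nonzero
elements in distinct cells generate a non-nilpotent subsemigroup; consequently the
upper non-nilpotent graph of `M⁰(G, I, Λ; P) \ {θ}` is connected and regular. -/
theorem stmt8 {G I L : Type*} [Group G] [Finite G] [Finite I] [Finite L]
    [Nonempty I] [Nonempty L]
    (P : L → I → Option G) (hG : Group.IsNilpotent G)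
    (hP : ∀ l i, P l i ≠ none) (hcard : 2 < Nat.card I + Nat.card L) :
    (∀ (g g' : G) (i i' : I) (l l' : L), (i, l) ≠ (i', l') →
      ¬ SetMN (Subsemigroup.closure
          ({ReesM0.elem (P := P) g i l, ReesM0.elem (P := P) g' i' l'} :
            Set (ReesM0 G I L P)) : Set (ReesM0 G I L P))) ∧
    ((nnGraph (ReesM0 G I L P)).induce
        {x : ReesM0 G I L P | x ≠ ReesM0.theta}).Connected ∧
    (∃ d : ℕ, ∀ v : {x : ReesM0 G I L P // x ≠ ReesM0.theta},
      {u | ((nnGraph (ReesM0 G I L P)).induce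
          {x : ReesM0 G I L P | x ≠ ReesM0.theta}).Adj v u}.ncard = d) := by
  classical
  have helper : ∀ x : Option (G × I × L), x ≠ none → ∃ g i l, x = some (g, i, l) := by
    rintro (_ | ⟨g, i, l⟩) h
    · exact absurd rfl h
    · exact ⟨g, i, l, rfl⟩
  have part1 : ∀ (g g' : G) (i i' : I) (l l' : L), (i, l) ≠ (i', l') →
      ¬ SetMN (Subsemigroup.closure
          ({ReesM0.elem (P := P) g i l, ReesM0.elem (P := P) g' i' l'} :
            Set (ReesM0 G I L P)) : Set (ReesM0 G I L P)) :=
    fun g g' i i' l l' hne => diff_cell_not_setMN hP hne _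
      (Subsemigroup.subset_closure (Or.inl rfl)) (Subsemigroup.subset_closure (Or.inr rfl))
  set V : Set (ReesM0 G I L P) := {x | x ≠ ReesM0.theta} with hV
  set Gr := (nnGraph (ReesM0 G I L P)).induce V with hGr
  have decomp : ∀ u : ↥V, ∃ g i l, (u : ReesM0 G I L P) = ReesM0.elem (P := P) g i l :=
    fun u => helper u.1 u.2
  have adj_iff' : ∀ (u v : ↥V) (gu gv : G) (iu iv : I) (lu lv : L),
      (u : ReesM0 G I L P) = ReesM0.elem (P := P) gu iu lu →
      (v : ReesM0 G I L P) = ReesM0.elem (P := P) gv iv lv →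
      (Gr.Adj u v ↔ (iu, lu) ≠ (iv, lv)) := by
    intro u v gu gv iu iv lu lv hu hv
    have h0 : Gr.Adj u v ↔ NEdge (u : ReesM0 G I L P) (v : ReesM0 G I L P) := Iff.rfl
    rw [h0, hu, hv, nedge_iff hG hP]
  have third : ∀ (i : I) (l : L), ∃ (j : I) (m : L), (j, m) ≠ (i, l) := by
    intro i l
    rcases lt_or_ge 1 (Nat.card I) with h | h
    · haveI := Finite.one_lt_card_iff_nontrivial.mp h
      obtain ⟨j, hj⟩ := exists_ne i
      exact ⟨j, l, by simp [Prod.ext_iff, hj]⟩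
    · have h2 : 1 < Nat.card L := by have := Nat.card_pos (α := I); omega
      haveI := Finite.one_lt_card_iff_nontrivial.mp h2
      obtain ⟨m, hm⟩ := exists_ne l
      exact ⟨i, m, by simp [Prod.ext_iff, hm]⟩
  have hmemV : ∀ t : G × I × L, (some t : ReesM0 G I L P) ∈ V :=
    fun t h => Option.some_ne_none t h
  refine ⟨part1, ?_, ?_⟩
  · -- connected
    haveI : Nonempty ↥V :=
      ⟨⟨some (1, Classical.arbitrary I, Classical.arbitrary L), hmemV _⟩⟩
    refine ⟨fun u v => ?_⟩
    obtain ⟨gu, iu, lu, hu⟩ := decomp u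
    obtain ⟨gv, iv, lv, hv⟩ := decomp v
    by_cases hc : (iu, lu) = (iv, lv)
    · obtain ⟨j, m, hjm⟩ := third iu lu
      set mid : ↥V := ⟨some (1, j, m), hmemV _⟩ with hmid
      have hmid' : (mid : ReesM0 G I L P) = ReesM0.elem (P := P) 1 j m := rfl
      have a1 : Gr.Adj u mid :=
        (adj_iff' u mid gu 1 iu j lu m hu hmid').mpr (Ne.symm hjm)
      have a2 : Gr.Adj mid v :=
        (adj_iff' mid v 1 gv j iv m lv hmid' hv).mpr (by rw [← hc]; exact hjm)
      exact (a1.reachable).trans a2.reachable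
    · exact ((adj_iff' u v gu gv iu iv lu lv hu hv).mpr hc).reachable
  · -- regular
    set e : ↥V ≃ (G × I × L) :=
      { toFun := fun u => Option.get u.1 (Option.isSome_iff_ne_none.mpr u.2)
        invFun := fun t => ⟨some t, hmemV t⟩
        left_inv := by
          rintro ⟨(_ | t), hu⟩
          · exact absurd rfl hu
          · rfl
        right_inv := fun t => rfl } with he
    refine ⟨Nat.card G * (Nat.card I * Nat.card L - 1), fun v => ?_⟩
    obtain ⟨gv, iv, lv, hv⟩ := decomp v
    have hset : {u | Gr.Adj v u} = e ⁻¹' {t : G × I × L | t.2 ≠ (iv, lv)} := by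
      ext u
      obtain ⟨gu, iu, lu, hu⟩ := decomp u
      have heu : e u = (gu, iu, lu) := by
        simp only [he, Equiv.coe_fn_mk]
        have hget : ∀ (o : Option (G × I × L)) (h : o.isSome), o = some (gu, iu, lu) →
            Option.get o h = (gu, iu, lu) := by rintro o h rfl; rfl
        exact hget _ _ hu
      simp only [Set.mem_setOf_eq, Set.mem_preimage, heu]
      rw [adj_iff' v u gv gu iv iu lv lu hv hu]
      exact ne_comm
    rw [hset]
    have hpre : e ⁻¹' {t : G × I × L | t.2 ≠ (iv, lv)}
        = e.symm '' {t : G × I × L | t.2 ≠ (iv, lv)} := by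
      rw [Equiv.image_eq_preimage_symm]
      simp
    rw [hpre, Set.ncard_image_of_injective _ e.symm.injective,
      ← Nat.card_coe_set_eq]
    have hc1 : Nat.card ↥{t : G × I × L | t.2 ≠ (iv, lv)}
        = Nat.card (G × {q : I × L // q ≠ (iv, lv)}) :=
      Nat.card_congr ⟨fun t => (t.1.1, ⟨t.1.2, t.2⟩),
        fun x => ⟨(x.1, x.2.1), x.2.2⟩, fun t => rfl, fun x => rfl⟩
    rw [hc1, Nat.card_prod]
    congr 1
    letI : Fintype (I × L) := Fintype.ofFinite _
    rw [Nat.card_eq_fintype_card, ← Nat.card_prod, Nat.card_eq_fintype_card]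
    have : Fintype.card {q : I × L // q ≠ (iv, lv)}
        = Fintype.card (I × L) - Fintype.card {q : I × L // q = (iv, lv)} :=
      Fintype.card_subtype_compl _
    rw [this, Fintype.card_subtype_eq]
end

section
/- Let S be a finite semigroup with zero θ and let J be an ideal of S with J ≅ M^0(G, I, Λ; P) a regular Rees matrix semigroup all of whose sandwich matrix entries are non-zero. Then F_J = {s ∈ S \ J : sj ≠ θ, js ≠ θ and j's j ≠ θ for all j, j' ∈ J \ {θ}}, the set F_J ∪ (J \ {θ}) is a subsemigroup of S, and F'_J = S \ (F_J ∪ (J \ {θ})) is an ideal of S. -/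
/-- For a semigroup `S` with zero and an ideal `J` of `S`:
`F_J = {s ∈ S \ J : sj ≠ θ or js ≠ θ for some j ∈ J}`. -/
def Fset {S : Type*} [SemigroupWithZero S] (J : Set S) : Set S :=
  {s | s ∉ J ∧ ∃ j ∈ J, s * j ≠ 0 ∨ j * s ≠ 0}

/-- Let `S` be a finite semigroup with zero `θ` and `J` an ideal of `S` isomorphic
(via `φ`) to a regular Rees matrix semigroup `M⁰(G, I, Λ; P)` all of whose sandwich
entries are non-zero.  Then `F_J` has the stated description, `F_J ∪ (J \ {θ})` is
a subsemigroup of `S`, and `F'_J = S \ (F_J ∪ (J \ {θ}))` is an ideal of `S`. -/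
theorem stmt10 {S : Type*} [SemigroupWithZero S] [Finite S]
    (J : Set S) (hJ : IsIdealIn Set.univ J) (h0 : (0 : S) ∈ J)
    {G I L : Type*} [Group G] [Nonempty I] [Nonempty L]
    (P : L → I → Option G) (hP : ∀ l i, P l i ≠ none)
    (φ : S → ReesM0 G I L P)
    (hom : ∀ a ∈ J, ∀ b ∈ J, φ (a * b) = φ a * φ b)
    (hinj : ∀ a ∈ J, ∀ b ∈ J, φ a = φ b → a = b)
    (hsurj : ∀ z : ReesM0 G I L P, ∃ a ∈ J, φ a = z)
    (hz : φ 0 = (none : Option (G × I × L))) :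
    Fset J = {s | s ∉ J ∧ ∀ j ∈ J, j ≠ 0 → ∀ j' ∈ J, j' ≠ 0 →
        s * j ≠ 0 ∧ j * s ≠ 0 ∧ j' * (s * j) ≠ 0} ∧
    (∀ a ∈ Fset J ∪ (J \ {0}), ∀ b ∈ Fset J ∪ (J \ {0}),
        a * b ∈ Fset J ∪ (J \ {0})) ∧
    IsIdealIn Set.univ (Set.univ \ (Fset J ∪ (J \ {0}))) := by
  classical
  obtain ⟨i0⟩ := ‹Nonempty I›
  obtain ⟨l0⟩ := ‹Nonempty L›
  have hidl : ∀ a ∈ J, ∀ t : S, t * a ∈ J ∧ a * t ∈ J := fun a ha t =>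
    hJ.2 a ha t (Set.mem_univ t)
  have hφne : ∀ a ∈ J, a ≠ 0 → φ a ≠ none := by
    intro a ha ha0 hn
    exact ha0 (hinj a ha 0 h0 (hn.trans hz.symm))
  have hzero : ∀ a ∈ J, a ≠ 0 → ∀ b ∈ J, b ≠ 0 → a * b ≠ 0 := by
    intro a ha ha0 b hb hb0 hab
    have key := hom a ha b hb
    change φ (a * b) = rmMul P (φ a) (φ b) at key
    rcases hga : φ a with _ | ⟨g, i, l⟩
    · exact hφne a ha ha0 hga
    rcases hgb : φ b with _ | ⟨h, j, m⟩
    · exact hφne b hb hb0 hgb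
    rw [hab, hz, hga, hgb] at key
    rcases hp : P l j with _ | p
    · exact hP l j hp
    rw [rmMul, hp] at key
    simp at key
  obtain ⟨j0, hj0J, hφj0⟩ := hsurj (some ((1 : G), i0, l0))
  have hj00 : j0 ≠ 0 := by
    intro h; rw [h, hz] at hφj0; exact absurd hφj0.symm (Option.some_ne_none _)
  have hstep1 : ∀ s : S, ∀ j ∈ J, s * j ≠ 0 → ∀ j1 ∈ J, j1 ≠ 0 → j1 * s ≠ 0 := by
    intro s j hj hsj j1 hj1 hj10 hj1s
    exact hzero j1 hj1 hj10 (s * j) (hidl j hj s).1 hsj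
      (by rw [← mul_assoc, hj1s, zero_mul])
  have hstep2 : ∀ s : S, ∀ j ∈ J, j * s ≠ 0 → ∀ j1 ∈ J, j1 ≠ 0 → s * j1 ≠ 0 := by
    intro s j hj hjs j1 hj1 hj10 hsj1
    exact hzero (j * s) (hidl j hj s).2 hjs j1 hj1 hj10
      (by rw [mul_assoc, hsj1, mul_zero])
  have hA : ∀ s : S, (∃ j ∈ J, s * j ≠ 0 ∨ j * s ≠ 0) →
      ∀ j1 ∈ J, j1 ≠ 0 → s * j1 ≠ 0 ∧ j1 * s ≠ 0 := by
    rintro s ⟨j, hj, hor⟩ j1 hj1 hj10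
    rcases hor with h | h
    · have hall : ∀ j1 ∈ J, j1 ≠ 0 → j1 * s ≠ 0 := hstep1 s j hj h
      exact ⟨hstep2 s j0 hj0J (hall j0 hj0J hj00) j1 hj1 hj10, hall j1 hj1 hj10⟩
    · have hall : ∀ j1 ∈ J, j1 ≠ 0 → s * j1 ≠ 0 := hstep2 s j hj h
      exact ⟨hall j1 hj1 hj10, hstep1 s j0 hj0J (hall j0 hj0J hj00) j1 hj1 hj10⟩
  refine ⟨?_, ?_, ?_⟩
  · ext s
    simp only [Fset, Set.mem_setOf_eq]
    constructor
    · rintro ⟨hsJ, hex⟩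
      refine ⟨hsJ, fun j hj hj0 j' hj' hj'0 => ?_⟩
      obtain ⟨h1, h2⟩ := hA s hex j hj hj0
      exact ⟨h1, h2, hzero j' hj' hj'0 (s * j) (hidl j hj s).1 h1⟩
    · rintro ⟨hsJ, hall⟩
      obtain ⟨h1, -, -⟩ := hall j0 hj0J hj00 j0 hj0J hj00
      exact ⟨hsJ, j0, hj0J, Or.inl h1⟩
  · rintro a (haF | ⟨haJ, ha0⟩) b (hbF | ⟨hbJ, hb0⟩)
    · -- both in Fset
      obtain ⟨haJ', hexa⟩ := haF
      obtain ⟨hbJ', hexb⟩ := hbF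
      have hbj0 : b * j0 ≠ 0 := (hA b hexb j0 hj0J hj00).1
      have hbj0J : b * j0 ∈ J := (hidl j0 hj0J b).1
      have habj0 : a * (b * j0) ≠ 0 := (hA a hexa (b * j0) hbj0J hbj0).1
      by_cases hab : a * b ∈ J
      · exact Set.mem_union_right _
          ⟨hab, fun h => habj0 (by rw [← mul_assoc, h, zero_mul])⟩
      · exact Set.mem_union_left _
          ⟨hab, j0, hj0J, Or.inl (by rw [mul_assoc]; exact habj0)⟩
    · -- a ∈ Fset, b ∈ J \ {0}
      obtain ⟨haJ', hexa⟩ := haF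
      have hb0' : b ≠ 0 := hb0
      exact Set.mem_union_right _ ⟨(hidl b hbJ a).1, (hA a hexa b hbJ hb0').1⟩
    · -- a ∈ J \ {0}, b ∈ Fset
      obtain ⟨hbJ', hexb⟩ := hbF
      have ha0' : a ≠ 0 := ha0
      exact Set.mem_union_right _ ⟨(hidl a haJ b).2, (hA b hexb a haJ ha0').2⟩
    · -- both in J \ {0}
      have ha0' : a ≠ 0 := ha0
      have hb0' : b ≠ 0 := hb0
      exact Set.mem_union_right _ ⟨(hidl a haJ b).2, hzero a haJ ha0' b hbJ hb0'⟩
  · refine ⟨fun x _ => Set.mem_univ x, fun a ha t _ => ?_⟩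
    obtain ⟨-, hna⟩ := ha
    have hcases : a = 0 ∨ (a ∉ J ∧ ∀ j ∈ J, a * j = 0 ∧ j * a = 0) := by
      by_cases haJ : a ∈ J
      · left
        by_contra h
        exact hna (Or.inr ⟨haJ, h⟩)
      · right
        refine ⟨haJ, fun j hj => ?_⟩
        constructor
        · by_contra h
          exact hna (Or.inl ⟨haJ, j, hj, Or.inl h⟩)
        · by_contra h
          exact hna (Or.inl ⟨haJ, j, hj, Or.inr h⟩)
    rcases hcases with rfl | ⟨haJ, hann⟩
    · constructor
      · refine ⟨Set.mem_univ _, ?_⟩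
        rw [mul_zero]
        rintro (⟨h1, -⟩ | ⟨-, h2⟩)
        · exact h1 h0
        · exact h2 rfl
      · refine ⟨Set.mem_univ _, ?_⟩
        rw [zero_mul]
        rintro (⟨h1, -⟩ | ⟨-, h2⟩)
        · exact h1 h0
        · exact h2 rfl
    · constructor
      · refine ⟨Set.mem_univ _, ?_⟩
        rintro (⟨htaJ, j, hj, hor⟩ | ⟨htaJ, hta0⟩)
        · rcases hor with h | h
          · exact h (by rw [mul_assoc, (hann j hj).1, mul_zero])
          · exact h (by rw [← mul_assoc, (hann (j * t) (hidl j hj t).2 |>.2 : (j * t) * a = 0)])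
        · have hta0' : t * a ≠ 0 := hta0
          exact hzero (t * a) htaJ hta0' j0 hj0J hj00
            (by rw [mul_assoc, (hann j0 hj0J).1, mul_zero])
      · refine ⟨Set.mem_univ _, ?_⟩
        rintro (⟨hatJ, j, hj, hor⟩ | ⟨hatJ, hat0⟩)
        · rcases hor with h | h
          · exact h (by rw [mul_assoc, ((hann (t * j) (hidl j hj t).1).1 : a * (t * j) = 0)])
          · exact h (by rw [← mul_assoc, (hann j hj).2, zero_mul])
        · have hat0' : a * t ≠ 0 := hat0
          exact hzero j0 hj0J hj00 (a * t) hatJ hat0'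
            (by rw [← mul_assoc, (hann j0 hj0J).2, zero_mul])
end
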